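/- arXiv:1305.0127 — 8 statements merged into one kernel-verified Lean document; each statement's English description precedes it below -/
import Mathlib

section
/- Let S be a factorial set of words over an alphabet A with k+1 = Card(S ∩ A) letters occurring in S. If S is neutral (every word w ∈ S satisfies e(w) − ℓ(w) − r(w) + 1 = 0), then for all n ≥ 0 the first difference of the complexity satisfies p_{n+1} − p_n = k, where p_n = Card(S ∩ A^n). -/
namespace Paper

variable {A : Type*}

/-- A set of words is factorial if it contains all factors of its elements. -/
def Factorial (S : Set (List A)) : Prop := ∀ w ∈ S, ∀ u : List A, u <:+: w → u ∈ S

def Lext (S : Set (List A)) (w : List A) : Set A := {a | a :: w ∈ S}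
def Rext (S : Set (List A)) (w : List A) : Set A := {a | w ++ [a] ∈ S}
def Eext (S : Set (List A)) (w : List A) : Set (A × A) := {p | p.1 :: (w ++ [p.2]) ∈ S}

def ExtVertex (S : Set (List A)) (w : List A) :=
  {v : A ⊕ A // Sum.elim (fun a => a ∈ Lext S w) (fun b => b ∈ Rext S w) v}

/-- The extension graph of `w` in `S`. -/
def extGraph (S : Set (List A)) (w : List A) : SimpleGraph (ExtVertex S w) where
  Adj u v := (∃ a b, u.1 = Sum.inl a ∧ v.1 = Sum.inr b ∧ (a, b) ∈ Eext S w) ∨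
             (∃ a b, u.1 = Sum.inr b ∧ v.1 = Sum.inl a ∧ (a, b) ∈ Eext S w)
  symm := by
    constructor
    rintro u v (⟨a, b, h1, h2, h3⟩ | ⟨a, b, h1, h2, h3⟩)
    · exact Or.inr ⟨a, b, h2, h1, h3⟩
    · exact Or.inl ⟨a, b, h2, h1, h3⟩
  loopless := by
    constructor
    rintro u (⟨a, b, h1, h2, _⟩ | ⟨a, b, h1, h2, _⟩) <;> rw [h1] at h2 <;> simp at h2

def IsPrefixCode (X : Set (List A)) : Prop :=
  (∀ x ∈ X, x ≠ []) ∧ ∀ x ∈ X, ∀ y ∈ X, x <+: y → x = y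

def IsSuffixCode (X : Set (List A)) : Prop :=
  (∀ x ∈ X, x ≠ []) ∧ ∀ x ∈ X, ∀ y ∈ X, x <:+ y → x = y

def IsBifixCode (X : Set (List A)) : Prop := IsPrefixCode X ∧ IsSuffixCode X

/-- The submonoid `X*` generated by a set of words. -/
def starOf (X : Set (List A)) : Set (List A) :=
  {m | ∃ ls : List (List A), (∀ u ∈ ls, u ∈ X) ∧ m = ls.flatten}

/-- A parse of `w` with respect to `X` : `w = v ++ x ++ u`, `v` has no suffix in `X`,
`x ∈ X*`, `u` has no prefix in `X`. -/
def IsParse (X : Set (List A)) (w : List A) (p : List A × List A × List A) : Prop :=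
  w = p.1 ++ p.2.1 ++ p.2.2 ∧ (∀ s, s <:+ p.1 → s ∉ X) ∧ p.2.1 ∈ starOf X ∧
    (∀ t, t <+: p.2.2 → t ∉ X)

noncomputable def parseCount (X : Set (List A)) (w : List A) : ℕ :=
  {p : List A × List A × List A | IsParse X w p}.ncard

/-- `X` has `S`-degree `d`. -/
def SDegreeIs (S X : Set (List A)) (d : ℕ) : Prop :=
  (∀ w ∈ S, parseCount X w ≤ d) ∧ ∃ w ∈ S, parseCount X w = d

def IsSMaximalBifixCode (S X : Set (List A)) : Prop :=
  IsBifixCode X ∧ X ⊆ S ∧ ∀ Y : Set (List A), IsBifixCode Y → Y ⊆ S → X ⊆ Y → Y = X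

def Recurrent (S : Set (List A)) : Prop :=
  Factorial S ∧ S ≠ {[]} ∧ S.Nonempty ∧ ∀ u ∈ S, ∀ w ∈ S, ∃ v, u ++ v ++ w ∈ S

def UniformlyRecurrent (S : Set (List A)) : Prop :=
  Factorial S ∧ (∀ w ∈ S, ∃ a : A, w ++ [a] ∈ S) ∧
    ∀ u ∈ S, ∃ n : ℕ, ∀ w ∈ S, w.length = n → u <:+: w

/-- The element of the free group corresponding to a word. -/
def toFG (w : List A) : FreeGroup A := (w.map FreeGroup.of).prod

/-- `T` is a basis of the subgroup `H` of the free group on `A`. -/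
def IsBasisOf (T : Set (FreeGroup A)) (H : Subgroup (FreeGroup A)) : Prop :=
  Function.Injective (FreeGroup.lift (Subtype.val : T → FreeGroup A)) ∧
  (FreeGroup.lift (Subtype.val : T → FreeGroup A)).range = H


section Aux
variable {A : Type*} [Fintype A] (S : Set (List A))


private lemma finite_level (n : ℕ) : {w ∈ S | w.length = n}.Finite :=
  (List.finite_length_eq A n).subset fun _ hw => hw.2

open Classical in
private lemma level_right (hfac : Factorial S) (n : ℕ) :
    {w ∈ S | w.length = n + 1}.ncard =
      ∑ u ∈ (finite_level S n).toFinset, (Rext S u).ncard := by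
  rw [Set.ncard_eq_toFinset_card _ (finite_level S (n + 1))]
  rw [Finset.card_eq_sum_card_fiberwise (f := List.dropLast)
    (t := (finite_level S n).toFinset) (fun w hw => by
      simp only [Finset.mem_coe, Set.Finite.mem_toFinset, Set.mem_setOf_eq] at hw ⊢
      exact ⟨hfac w hw.1 _ (List.dropLast_prefix w).isInfix,
        by simp [hw.2]⟩)]
  refine Finset.sum_congr rfl fun u hu => ?_
  simp only [Set.Finite.mem_toFinset, Set.mem_setOf_eq] at hu
  have himg : (((finite_level S (n + 1)).toFinset.filter
      (fun w => w.dropLast = u) : Finset (List A)) : Set (List A)) =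
      (fun a => u ++ [a]) '' (Rext S u) := by
    ext w
    simp only [Finset.coe_filter, Set.Finite.mem_toFinset, Set.mem_setOf_eq,
      Set.mem_image]
    constructor
    · rintro ⟨⟨hwS, hwl⟩, hd⟩
      have hne : w ≠ [] := by intro h; simp [h] at hwl
      refine ⟨w.getLast hne, ?_, ?_⟩
      · show u ++ [w.getLast hne] ∈ S
        rw [← hd, List.dropLast_append_getLast hne]; exact hwS
      · rw [← hd, List.dropLast_append_getLast hne]
    · rintro ⟨a, ha, rfl⟩
      exact ⟨⟨ha, by simp [hu.2]⟩, by simp⟩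
  have := congrArg Set.ncard himg
  rw [Set.ncard_coe_finset, Set.ncard_image_of_injective _ (fun a b h => by
    simpa using h)] at this
  exact this

open Classical in
private lemma level_left (hfac : Factorial S) (n : ℕ) :
    {w ∈ S | w.length = n + 1}.ncard =
      ∑ u ∈ (finite_level S n).toFinset, (Lext S u).ncard := by
  rw [Set.ncard_eq_toFinset_card _ (finite_level S (n + 1))]
  rw [Finset.card_eq_sum_card_fiberwise (f := List.tail)
    (t := (finite_level S n).toFinset) (fun w hw => by
      simp only [Finset.mem_coe, Set.Finite.mem_toFinset, Set.mem_setOf_eq] at hw ⊢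
      exact ⟨hfac w hw.1 _ (List.tail_suffix w).isInfix,
        by simp [hw.2]⟩)]
  refine Finset.sum_congr rfl fun u hu => ?_
  simp only [Set.Finite.mem_toFinset, Set.mem_setOf_eq] at hu
  have himg : (((finite_level S (n + 1)).toFinset.filter
      (fun w => w.tail = u) : Finset (List A)) : Set (List A)) =
      (fun a => a :: u) '' (Lext S u) := by
    ext w
    simp only [Finset.coe_filter, Set.Finite.mem_toFinset, Set.mem_setOf_eq,
      Set.mem_image]
    constructor
    · rintro ⟨⟨hwS, hwl⟩, hd⟩
      have hne : w ≠ [] := by intro h; simp [h] at hwl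
      refine ⟨w.head hne, ?_, ?_⟩
      · show w.head hne :: u ∈ S
        rw [← hd, List.cons_head_tail hne]; exact hwS
      · rw [← hd, List.cons_head_tail hne]
    · rintro ⟨a, ha, rfl⟩
      exact ⟨⟨ha, by simp [hu.2]⟩, by simp⟩
  have := congrArg Set.ncard himg
  rw [Set.ncard_coe_finset, Set.ncard_image_of_injective _ (fun a b h => by
    simpa using h)] at this
  exact this

open Classical in
private lemma level_both (hfac : Factorial S) (n : ℕ) :
    {w ∈ S | w.length = n + 2}.ncard =
      ∑ u ∈ (finite_level S n).toFinset, (Eext S u).ncard := by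
  rw [Set.ncard_eq_toFinset_card _ (finite_level S (n + 2))]
  rw [Finset.card_eq_sum_card_fiberwise (f := fun w => w.tail.dropLast)
    (t := (finite_level S n).toFinset) (fun w hw => by
      simp only [Finset.mem_coe, Set.Finite.mem_toFinset, Set.mem_setOf_eq] at hw ⊢
      refine ⟨hfac w hw.1 _ (((List.dropLast_prefix w.tail).isInfix).trans
        (List.tail_suffix w).isInfix), ?_⟩
      simp [hw.2])]
  refine Finset.sum_congr rfl fun u hu => ?_
  simp only [Set.Finite.mem_toFinset, Set.mem_setOf_eq] at hu
  have himg : (((finite_level S (n + 2)).toFinset.filter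
      (fun w => w.tail.dropLast = u) : Finset (List A)) : Set (List A)) =
      (fun p : A × A => p.1 :: (u ++ [p.2])) '' (Eext S u) := by
    ext w
    simp only [Finset.coe_filter, Set.Finite.mem_toFinset, Set.mem_setOf_eq,
      Set.mem_image]
    constructor
    · rintro ⟨⟨hwS, hwl⟩, hd⟩
      have hne : w ≠ [] := by intro h; simp [h] at hwl
      have hne2 : w.tail ≠ [] := by
        intro h
        have := List.length_tail (l := w)
        rw [h] at this; simp [hwl] at this
      have hw' : w = w.head hne :: (u ++ [w.tail.getLast hne2]) := by
        conv_lhs => rw [← List.cons_head_tail hne,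
          ← List.dropLast_append_getLast hne2]
        rw [hd]
      refine ⟨(w.head hne, w.tail.getLast hne2), ?_, hw'.symm⟩
      show w.head hne :: (u ++ [w.tail.getLast hne2]) ∈ S
      rw [← hw']; exact hwS
    · rintro ⟨⟨a, b⟩, hab, rfl⟩
      refine ⟨⟨hab, ?_⟩, by simp⟩
      simp [hu.2]
  have := congrArg Set.ncard himg
  rw [Set.ncard_coe_finset, Set.ncard_image_of_injective _ ?_] at this
  · exact this
  · rintro ⟨a, b⟩ ⟨a', b'⟩ h
    simp only [List.cons.injEq, List.append_cancel_left_eq, List.cons.injEq] at h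
    simp [h.1, h.2]

end Aux

/-- In a neutral factorial set over `k + 1` letters, the first difference
of the complexity is constantly `k` : `p (n+1) = p n + k`. -/
theorem neutral_first_difference {A : Type*} [Fintype A] (S : Set (List A)) (k : ℕ)
    (hfac : Factorial S) (hk : {a : A | [a] ∈ S}.ncard = k + 1)
    (hneutral : ∀ w ∈ S,
      ((Eext S w).ncard : ℤ) = (Lext S w).ncard + (Rext S w).ncard - 1) :
    ∀ n : ℕ, {w ∈ S | w.length = n + 1}.ncard = {w ∈ S | w.length = n}.ncard + k := by
  classical
  have hnil : [] ∈ S := by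
    have hpos : {a : A | [a] ∈ S}.ncard ≠ 0 := by rw [hk]; omega
    obtain ⟨a, ha⟩ := Set.nonempty_of_ncard_ne_zero hpos
    exact hfac [a] ha [] List.nil_infix
  have h0 : {w ∈ S | w.length = 0}.ncard = 1 := by
    have : {w ∈ S | w.length = 0} = {([] : List A)} := by
      ext w
      constructor
      · rintro ⟨_, h2⟩; exact List.length_eq_zero_iff.mp h2
      · rintro rfl; exact ⟨hnil, rfl⟩
    rw [this, Set.ncard_singleton]
  have h1 : {w ∈ S | w.length = 1}.ncard = k + 1 := by
    have heq : {w ∈ S | w.length = 1} = (fun a : A => [a]) '' {a : A | [a] ∈ S} := by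
      ext w
      constructor
      · rintro ⟨h1', h2⟩
        obtain ⟨a, rfl⟩ := List.length_eq_one_iff.mp h2
        exact ⟨a, h1', rfl⟩
      · rintro ⟨a, ha, rfl⟩; exact ⟨ha, rfl⟩
    rw [heq, Set.ncard_image_of_injective _ (fun a b h => by simpa using h), hk]
  intro n
  induction n with
  | zero => rw [h1, h0]; omega
  | succ n ih =>
    have key : ({w ∈ S | w.length = n + 2}.ncard : ℤ) =
        2 * {w ∈ S | w.length = n + 1}.ncard - {w ∈ S | w.length = n}.ncard := by
      rw [level_both S hfac n]
      push_cast
      rw [Finset.sum_congr rfl (fun u hu => hneutral u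
        ((Set.Finite.mem_toFinset _).mp hu).1)]
      rw [Finset.sum_sub_distrib, Finset.sum_add_distrib, Finset.sum_const,
        nsmul_eq_mul, mul_one, ← Nat.cast_sum, ← Nat.cast_sum,
        ← level_left S hfac n, ← level_right S hfac n,
        ← Set.ncard_eq_toFinset_card _ (finite_level S n)]
      ring
    have ihz : ({w ∈ S | w.length = n + 1}.ncard : ℤ) =
        {w ∈ S | w.length = n}.ncard + k := by exact_mod_cast ih
    have goal : ({w ∈ S | w.length = n + 2}.ncard : ℤ) =
        {w ∈ S | w.length = n + 1}.ncard + k := by omega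
    exact_mod_cast goal

end Paper
end

section
/- Let S be a factorial set of words and set b_n = s_{n+1} − s_n where s_n = p_{n+1} − p_n and p_n = Card(S ∩ A^n). Then for all n ≥ 0: b_n = Σ_{w ∈ S ∩ A^n} m(w) and s_n = Σ_{w ∈ S ∩ A^n} (r(w) − 1), where m(w) = e(w) − ℓ(w) − r(w) + 1. -/
namespace Paper

variable {A : Type*}

open Classical in
private lemma ncard_eq_finsum_fibers' {α β : Type*} (T : Set α) (B : Set β)
    (hT : T.Finite) (hB : B.Finite) (π : α → β) (hπ : ∀ a ∈ T, π a ∈ B) :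
    T.ncard = ∑ᶠ w ∈ B, {v ∈ T | π v = w}.ncard := by
  classical
  rw [← hB.coe_toFinset, finsum_mem_coe_finset,
    Set.ncard_eq_toFinset_card _ hT,
    Finset.card_eq_sum_card_fiberwise (f := π) (t := hB.toFinset)
      (fun v hv => hB.mem_toFinset.2 (hπ v (hT.mem_toFinset.1 hv)))]
  refine Finset.sum_congr rfl fun w _ => ?_
  rw [← Set.ncard_coe_finset]
  congr 1
  ext v
  simp [Set.mem_setOf_eq, and_comm]

private lemma fiber_R' {A : Type*} (S : Set (List A)) (n : ℕ) (w : List A) (hl : w.length = n) :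
    {v ∈ {v ∈ S | v.length = n + 1} | v.dropLast = w} = (fun a => w ++ [a]) '' Rext S w := by
  ext v
  constructor
  · rintro ⟨⟨hvS, hvl⟩, hd⟩
    have hne : v ≠ [] := by intro h; simp [h] at hvl
    refine ⟨v.getLast hne, ?_, ?_⟩
    · show w ++ [v.getLast hne] ∈ S
      rw [← hd, List.dropLast_append_getLast hne]; exact hvS
    · subst hd; exact List.dropLast_append_getLast hne
  · rintro ⟨a, ha, rfl⟩
    exact ⟨⟨ha, by simp [hl]⟩, by simp⟩

private lemma fiber_L' {A : Type*} (S : Set (List A)) (n : ℕ) (w : List A) (hl : w.length = n) :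
    {v ∈ {v ∈ S | v.length = n + 1} | v.tail = w} = (fun a => a :: w) '' Lext S w := by
  ext v
  constructor
  · rintro ⟨⟨hvS, hvl⟩, hd⟩
    have hne : v ≠ [] := by intro h; simp [h] at hvl
    refine ⟨v.head hne, ?_, ?_⟩
    · show v.head hne :: w ∈ S
      rw [← hd, List.cons_head_tail]; exact hvS
    · subst hd; exact List.cons_head_tail hne
  · rintro ⟨a, ha, rfl⟩
    exact ⟨⟨ha, by simp [hl]⟩, by simp⟩

private lemma fiber_E' {A : Type*} (S : Set (List A)) (n : ℕ) (w : List A) (hl : w.length = n) :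
    {v ∈ {v ∈ S | v.length = n + 2} | v.tail.dropLast = w}
      = (fun p : A × A => p.1 :: (w ++ [p.2])) '' Eext S w := by
  ext v
  constructor
  · rintro ⟨⟨hvS, hvl⟩, hd⟩
    have hne : v ≠ [] := by intro h; simp [h] at hvl
    have hnet : v.tail ≠ [] := by
      intro h
      have := List.length_tail (l := v)
      rw [h, hvl] at this; simp at this
    refine ⟨(v.head hne, v.tail.getLast hnet), ?_, ?_⟩
    · show v.head hne :: (w ++ [v.tail.getLast hnet]) ∈ S
      rw [← hd, List.dropLast_append_getLast hnet, List.cons_head_tail]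
      exact hvS
    · show v.head hne :: (w ++ [v.tail.getLast hnet]) = v
      rw [← hd, List.dropLast_append_getLast hnet]
      exact List.cons_head_tail hne
  · rintro ⟨⟨a, b⟩, hab, rfl⟩
    refine ⟨⟨hab, by simp [hl]⟩, by simp⟩

/-- For a factorial set `S`, with `p n = Card (S ∩ Aⁿ)`,
`s n = p (n+1) - p n` and `b n = s (n+1) - s n`, one has
`b n = Σ_{w ∈ S ∩ Aⁿ} m(w)` and `s n = Σ_{w ∈ S ∩ Aⁿ} (r(w) - 1)`. -/
theorem first_and_second_differences {A : Type*} [Fintype A] (S : Set (List A))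
    (hfac : Factorial S) (n : ℕ) :
    (({w ∈ S | w.length = n + 2}.ncard : ℤ) - {w ∈ S | w.length = n + 1}.ncard)
        - (({w ∈ S | w.length = n + 1}.ncard : ℤ) - {w ∈ S | w.length = n}.ncard)
      = ∑ᶠ w ∈ {w ∈ S | w.length = n},
          (((Eext S w).ncard : ℤ) - (Lext S w).ncard - (Rext S w).ncard + 1) ∧
    ({w ∈ S | w.length = n + 1}.ncard : ℤ) - {w ∈ S | w.length = n}.ncard
      = ∑ᶠ w ∈ {w ∈ S | w.length = n}, (((Rext S w).ncard : ℤ) - 1) := by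
  classical
  have hfin : ∀ m : ℕ, {w ∈ S | w.length = m}.Finite := fun m =>
    (List.finite_length_eq A m).subset fun w hw => hw.2
  have hBfin := hfin n
  set F := hBfin.toFinset with hF
  have hcoe : (↑F : Set (List A)) = {w ∈ S | w.length = n} := hBfin.coe_toFinset
  have hmemF : ∀ w ∈ F, w ∈ S ∧ w.length = n := fun w hw => hBfin.mem_toFinset.1 hw
  -- generic fiberwise count as a Finset sum
  have sumfib : ∀ (m : ℕ) (π : List A → List A),
      (∀ v ∈ {v ∈ S | v.length = m}, π v ∈ {w ∈ S | w.length = n}) →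
      {v ∈ S | v.length = m}.ncard
        = ∑ w ∈ F, {v ∈ {v ∈ S | v.length = m} | π v = w}.ncard := by
    intro m π hπ
    rw [ncard_eq_finsum_fibers' _ _ (hfin m) hBfin π hπ, ← hcoe, finsum_mem_coe_finset]
  have hR : {v ∈ S | v.length = n + 1}.ncard = ∑ w ∈ F, (Rext S w).ncard := by
    rw [sumfib (n + 1) (fun v => v.dropLast) ?_]
    · refine Finset.sum_congr rfl fun w hw => ?_
      rw [fiber_R' S n w (hmemF w hw).2,
        Set.ncard_image_of_injective _ (fun a b h => by simpa using h)]
    · rintro v ⟨hvS, hvl⟩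
      exact ⟨hfac v hvS _ (List.dropLast_prefix v).isInfix, by simp [hvl]⟩
  have hL : {v ∈ S | v.length = n + 1}.ncard = ∑ w ∈ F, (Lext S w).ncard := by
    rw [sumfib (n + 1) (fun v => v.tail) ?_]
    · refine Finset.sum_congr rfl fun w hw => ?_
      rw [fiber_L' S n w (hmemF w hw).2,
        Set.ncard_image_of_injective _ (fun a b h => by simpa using h)]
    · rintro v ⟨hvS, hvl⟩
      exact ⟨hfac v hvS _ (List.tail_suffix v).isInfix, by simp [hvl]⟩
  have hE : {v ∈ S | v.length = n + 2}.ncard = ∑ w ∈ F, (Eext S w).ncard := by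
    rw [sumfib (n + 2) (fun v => v.tail.dropLast) ?_]
    · refine Finset.sum_congr rfl fun w hw => ?_
      rw [fiber_E' S n w (hmemF w hw).2,
        Set.ncard_image_of_injective _
          (fun p q h => by
            obtain ⟨a, b⟩ := p; obtain ⟨c, d⟩ := q
            simp only [List.cons.injEq, List.append_cancel_left_eq,
              List.cons.injEq, and_true] at h
            simpa [Prod.ext_iff] using h)]
    · rintro v ⟨hvS, hvl⟩
      refine ⟨hfac v hvS _
        ((List.dropLast_prefix v.tail).isInfix.trans (List.tail_suffix v).isInfix), ?_⟩
      simp [hvl]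
  have h0 : {w ∈ S | w.length = n}.ncard = F.card :=
    Set.ncard_eq_toFinset_card _ hBfin
  constructor
  · nth_rewrite 1 [hL]
    rw [hR, hE, h0, ← hcoe, finsum_mem_coe_finset]
    push_cast
    simp only [Finset.sum_add_distrib, Finset.sum_sub_distrib, Finset.sum_const,
      nsmul_eq_mul, mul_one]
    ring
  · rw [hR, h0, ← hcoe, finsum_mem_coe_finset]
    push_cast
    simp only [Finset.sum_sub_distrib, Finset.sum_const, nsmul_eq_mul, mul_one]


end Paper
end

section
/- Every Sturmian set is a tree set: for each word w in the set, the extension graph G(w) is a tree (connected and acyclic). -/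
namespace Paper

variable {A : Type*}

/-- The set of factors of the infinite word `x`. -/
def factorsOf (x : ℕ → A) : Set (List A) :=
  {w | ∃ i : ℕ, w = (List.range w.length).map fun j => x (i + j)}

def IsRightSpecial (S : Set (List A)) (w : List A) : Prop := 2 ≤ (Rext S w).ncard

/-- `x` is a strict episturmian word: its set of factors is closed under reversal,
has exactly one right-special factor of each length, and every right-special factor `u`
satisfies `r u = Card A`. -/
def IsStrictEpisturmian [Fintype A] (x : ℕ → A) : Prop :=
  (∀ w ∈ factorsOf x, w.reverse ∈ factorsOf x) ∧
  (∀ n : ℕ, ∃! w : List A,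
      w ∈ factorsOf x ∧ w.length = n ∧ IsRightSpecial (factorsOf x) w) ∧
  (∀ w ∈ factorsOf x, IsRightSpecial (factorsOf x) w →
      (Rext (factorsOf x) w).ncard = Fintype.card A)

section SturmianAux

open List

variable {A : Type*}

/-- The window of length `n` of `x` starting at `i`. -/
private def win (x : ℕ → A) (i n : ℕ) : List A := (List.range n).map fun j => x (i + j)

private lemma win_length (x : ℕ → A) (i n : ℕ) : (win x i n).length = n := by simp [win]

private lemma win_add (x : ℕ → A) (i m n : ℕ) :
    win x i (m + n) = win x i m ++ win x (i + m) n := by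
  unfold win
  rw [List.range_add, List.map_append, List.map_map]
  congr 1
  apply List.map_congr_left
  intro j _
  simp only [Function.comp_apply]
  congr 1
  omega

private lemma mem_factorsOf_iff {x : ℕ → A} {w : List A} :
    w ∈ factorsOf x ↔ ∃ i, w = win x i w.length := Iff.rfl

private lemma factorsOf_factorial (x : ℕ → A) : Factorial (factorsOf x) := by
  intro w hw u hu
  obtain ⟨i, hwi⟩ := hw
  obtain ⟨s, t, hst⟩ := hu
  subst hst
  have hn : (s ++ u ++ t).length = s.length + (u.length + t.length) := by
    simp [List.length_append]
  have h1 : s ++ (u ++ t) =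
      win x i s.length ++ (win x (i + s.length) u.length ++
        win x (i + s.length + u.length) t.length) := by
    rw [← win_add, ← win_add, ← hn, ← List.append_assoc]
    exact hwi
  obtain ⟨-, hut⟩ := List.append_inj h1 (by rw [win_length])
  obtain ⟨hu2, -⟩ := List.append_inj hut (by rw [win_length])
  exact ⟨i + s.length, hu2⟩

private lemma rext_nonempty {x : ℕ → A} {w : List A} (hw : w ∈ factorsOf x) :
    (Rext (factorsOf x) w).Nonempty := by
  obtain ⟨i, hwi⟩ := mem_factorsOf_iff.mp hw
  refine ⟨x (i + w.length), ⟨i, ?_⟩⟩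
  show w ++ [x (i + w.length)] = win x i (w ++ [x (i + w.length)]).length
  have : (w ++ [x (i + w.length)]).length = w.length + 1 := by simp
  rw [this, win_add, ← hwi]
  congr 1

private lemma rev_mem_iff {x : ℕ → A} (hrev : ∀ w ∈ factorsOf x, w.reverse ∈ factorsOf x)
    {w : List A} : w ∈ factorsOf x ↔ w.reverse ∈ factorsOf x := by
  constructor
  · exact fun h => hrev w h
  · intro h
    have := hrev _ h
    rwa [List.reverse_reverse] at this

private lemma lext_nonempty {x : ℕ → A} (hrev : ∀ w ∈ factorsOf x, w.reverse ∈ factorsOf x)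
    {w : List A} (hw : w ∈ factorsOf x) : (Lext (factorsOf x) w).Nonempty := by
  obtain ⟨a, ha⟩ := rext_nonempty (hrev w hw)
  refine ⟨a, ?_⟩
  show a :: w ∈ factorsOf x
  rw [rev_mem_iff hrev]
  simp only [List.reverse_cons]
  exact ha

private lemma rext_cons_subset {x : ℕ → A} (a : A) (w : List A) :
    Rext (factorsOf x) (a :: w) ⊆ Rext (factorsOf x) w := by
  intro b hb
  exact factorsOf_factorial x _ hb (w ++ [b]) ⟨[a], [], by simp⟩

private lemma mem_eext_iff {x : ℕ → A} {w : List A} {a b : A} :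
    (a, b) ∈ Eext (factorsOf x) w ↔ b ∈ Rext (factorsOf x) (a :: w) := by
  show a :: (w ++ [b]) ∈ factorsOf x ↔ (a :: w) ++ [b] ∈ factorsOf x
  rw [List.cons_append]

private lemma eext_mem_left {x : ℕ → A} {w : List A} {a b : A}
    (h : (a, b) ∈ Eext (factorsOf x) w) : a ∈ Lext (factorsOf x) w := by
  exact factorsOf_factorial x _ h (a :: w) ⟨[], [b], by simp⟩

private lemma eext_mem_right {x : ℕ → A} {w : List A} {a b : A}
    (h : (a, b) ∈ Eext (factorsOf x) w) : b ∈ Rext (factorsOf x) w := by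
  exact factorsOf_factorial x _ h (w ++ [b]) ⟨[a], [], by simp⟩

variable [Fintype A]

private lemma rext_singleton {x : ℕ → A} {w : List A} (hw : w ∈ factorsOf x)
    (hns : ¬ IsRightSpecial (factorsOf x) w) : ∃ b, Rext (factorsOf x) w = {b} := by
  rw [← Set.ncard_eq_one]
  have h1 : 0 < (Rext (factorsOf x) w).ncard :=
    (Set.ncard_pos (Set.toFinite _)).mpr (rext_nonempty hw)
  have h2 : ¬ 2 ≤ (Rext (factorsOf x) w).ncard := hns
  omega

private lemma rext_univ {x : ℕ → A} (hx : IsStrictEpisturmian x) {w : List A}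
    (hw : w ∈ factorsOf x) (hs : IsRightSpecial (factorsOf x) w) :
    Rext (factorsOf x) w = Set.univ := by
  refine Set.eq_of_subset_of_ncard_le (Set.subset_univ _) ?_ (Set.toFinite _)
  rw [Set.ncard_univ, Nat.card_eq_fintype_card, hx.2.2 w hw hs]

/-- The key structure lemma: the extension graph of `w` is a "double star". -/
private lemma structure_lemma {x : ℕ → A} (hx : IsStrictEpisturmian x) {w : List A}
    (hw : w ∈ factorsOf x) :
    ∃ a₀, a₀ ∈ Lext (factorsOf x) w ∧
      (∀ b ∈ Rext (factorsOf x) w, (a₀, b) ∈ Eext (factorsOf x) w) ∧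
      (∀ a ∈ Lext (factorsOf x) w, a ≠ a₀ → ∃! b, (a, b) ∈ Eext (factorsOf x) w) := by
  by_cases hrs : IsRightSpecial (factorsOf x) w
  · -- w is right-special; the unique right-special word of length n+1 is a₀ :: w
    obtain ⟨u, ⟨huS, hulen, huRS⟩, huniq⟩ := hx.2.1 (w.length + 1)
    obtain ⟨a₀, u', rfl⟩ : ∃ a₀ u', u = a₀ :: u' := by
      cases u with
      | nil => simp at hulen
      | cons a u' => exact ⟨a, u', rfl⟩
    have hu'len : u'.length = w.length := by simpa using hulen
    have hu'S : u' ∈ (factorsOf x) := factorsOf_factorial x _ huS u' ⟨[a₀], [], by simp⟩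
    have hu'RS : IsRightSpecial (factorsOf x) u' := by
      refine le_trans huRS (Set.ncard_le_ncard ?_ (Set.toFinite _))
      exact rext_cons_subset a₀ u'
    have hwu' : u' = w := by
      obtain ⟨v, -, hvuniq⟩ := hx.2.1 w.length
      rw [hvuniq u' ⟨hu'S, hu'len, hu'RS⟩, hvuniq w ⟨hw, rfl, hrs⟩]
    subst hwu'
    have ha₀ : a₀ ∈ Lext (factorsOf x) u' := huS
    have hfull : Rext (factorsOf x) (a₀ :: u') = Set.univ := rext_univ hx huS huRS
    refine ⟨a₀, ha₀, ?_, ?_⟩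
    · intro b _
      rw [mem_eext_iff, hfull]
      trivial
    · intro a ha hne
      have haS : a :: u' ∈ (factorsOf x) := ha
      have hnrs : ¬ IsRightSpecial (factorsOf x) (a :: u') := by
        intro hc
        have heq := huniq (a :: u') ⟨haS, by simp [hu'len], hc⟩
        injection heq with h1 h2
        exact hne h1
      obtain ⟨c, hc⟩ := rext_singleton haS hnrs
      refine ⟨c, ?_, ?_⟩
      · show (a, c) ∈ Eext (factorsOf x) u'
        rw [mem_eext_iff, hc]
        rfl
      · intro b hb
        have hb' : (a, b) ∈ Eext (factorsOf x) u' := hb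
        rw [mem_eext_iff, hc] at hb'
        exact hb'
  · -- w is not right-special: Rext w = {b₀}
    obtain ⟨b₀, hb₀⟩ := rext_singleton hw hrs
    have hall : ∀ a ∈ Lext (factorsOf x) w, (a, b₀) ∈ Eext (factorsOf x) w := by
      intro a ha
      have haS : a :: w ∈ (factorsOf x) := ha
      obtain ⟨c, hc⟩ := rext_nonempty haS
      have hcw : c ∈ Rext (factorsOf x) w := rext_cons_subset a w hc
      have hcb : c = b₀ := by rw [hb₀] at hcw; exact hcw
      rw [mem_eext_iff]
      rwa [← hcb]
    obtain ⟨a₀, ha₀⟩ := lext_nonempty hx.1 hw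
    refine ⟨a₀, ha₀, ?_, ?_⟩
    · intro b hb
      rw [hb₀] at hb
      rw [hb]
      exact hall a₀ ha₀
    · intro a ha _
      refine ⟨b₀, hall a ha, ?_⟩
      intro b hb
      have hb' : (a, b) ∈ Eext (factorsOf x) w := hb
      have hbr := eext_mem_right hb'
      rw [hb₀] at hbr
      exact hbr

/-- In any cycle, every vertex of the support has two distinct neighbours. -/
private lemma exists_two_neighbors {V : Type*} {G : SimpleGraph V} {v₀ : V} {p : G.Walk v₀ v₀}
    (hp : p.IsCycle) {z : V} (hz : z ∈ p.support) :
    ∃ w₁ w₂, w₁ ≠ w₂ ∧ G.Adj z w₁ ∧ G.Adj z w₂ := by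
  classical
  have hc : (p.rotate z hz).IsCycle := hp.rotate hz
  obtain ⟨u₁, h₁, q, hq⟩ := SimpleGraph.Walk.not_nil_iff.mp hc.not_nil
  rw [hq, SimpleGraph.Walk.cons_isCycle_iff] at hc
  obtain ⟨hqp, hedge⟩ := hc
  have hqn : ¬ q.Nil := SimpleGraph.Walk.not_nil_of_ne (Ne.symm h₁.ne)
  have hqrn : ¬ q.reverse.Nil := by
    rw [SimpleGraph.Walk.nil_iff_length_eq, SimpleGraph.Walk.length_reverse]
    rwa [SimpleGraph.Walk.nil_iff_length_eq] at hqn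
  obtain ⟨u₂, h₂, q₂, hq₂⟩ := SimpleGraph.Walk.not_nil_iff.mp hqrn
  refine ⟨u₁, u₂, ?_, h₁, h₂⟩
  intro hne
  apply hedge
  have hmem : s(z, u₂) ∈ q.reverse.edges := by
    rw [hq₂, SimpleGraph.Walk.edges_cons]
    exact List.mem_cons_self
  rw [SimpleGraph.Walk.edges_reverse, List.mem_reverse] at hmem
  rw [← hne] at hmem
  exact hmem

end SturmianAux


/-- Every Sturmian set is a tree set: the extension graph of every
factor of a strict episturmian word is a tree. -/
theorem sturmian_is_tree_set {A : Type*} [Fintype A] (x : ℕ → A)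
    (hx : IsStrictEpisturmian x) :
    ∀ w ∈ factorsOf x, (extGraph (factorsOf x) w).IsTree := by
  intro w hw
  classical
  obtain ⟨a₀, ha₀, hstar, huniq⟩ := structure_lemma hx hw
  let c : ExtVertex (factorsOf x) w := ⟨Sum.inl a₀, ha₀⟩
  have hleaf : ∀ (z w₁ w₂ : ExtVertex (factorsOf x) w) (a : A), z.1 = Sum.inl a → a ≠ a₀ →
      (extGraph (factorsOf x) w).Adj z w₁ → (extGraph (factorsOf x) w).Adj z w₂ → w₁ = w₂ := by
    intro z w₁ w₂ a hz hne h1 h2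
    rcases h1 with ⟨a₁, b₁, hz1, hw1, he1⟩ | ⟨a₁, b₁, hz1, hw1, he1⟩
    swap
    · rw [hz] at hz1; simp at hz1
    rcases h2 with ⟨a₂, b₂, hz2, hw2, he2⟩ | ⟨a₂, b₂, hz2, hw2, he2⟩
    swap
    · rw [hz] at hz2; simp at hz2
    rw [hz] at hz1 hz2
    obtain rfl : a = a₁ := by injection hz1
    obtain rfl : a = a₂ := by injection hz2
    obtain ⟨b', -, hb'⟩ := huniq a (eext_mem_left he1) hne
    have hbb : b₁ = b₂ := by rw [hb' b₁ he1, hb' b₂ he2]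
    exact Subtype.ext (by rw [hw1, hw2, hbb])
  constructor
  · -- connectedness
    have hreach : ∀ u : ExtVertex (factorsOf x) w, (extGraph (factorsOf x) w).Reachable u c := by
      rintro ⟨(a | b), hu⟩
      · by_cases hea : a = a₀
        · subst hea
          exact SimpleGraph.Reachable.refl _
        · have hu' : a ∈ Lext (factorsOf x) w := hu
          obtain ⟨b, hab, -⟩ := huniq a hu' hea
          have hbR : b ∈ Rext (factorsOf x) w := eext_mem_right hab
          have h1 : (extGraph (factorsOf x) w).Adj ⟨Sum.inl a, hu⟩ ⟨Sum.inr b, hbR⟩ :=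
            Or.inl ⟨a, b, rfl, rfl, hab⟩
          have h2 : (extGraph (factorsOf x) w).Adj ⟨Sum.inr b, hbR⟩ c :=
            Or.inr ⟨a₀, b, rfl, rfl, hstar b hbR⟩
          exact h1.reachable.trans h2.reachable
      · have h2 : (extGraph (factorsOf x) w).Adj ⟨Sum.inr b, hu⟩ c :=
          Or.inr ⟨a₀, b, rfl, rfl, hstar b hu⟩
        exact h2.reachable
    haveI : Nonempty (ExtVertex (factorsOf x) w) := ⟨c⟩
    exact SimpleGraph.Connected.mk fun u v => (hreach u).trans (hreach v).symm
  · -- acyclicity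
    intro v₀ p hp
    have main : ∀ (z : ExtVertex (factorsOf x) w) (a : A), z.1 = Sum.inl a →
        z ∈ p.support → False := by
      intro z a hz hzs
      by_cases hea : a = a₀
      · rw [hea] at hz
        have hc2 : (p.rotate z hzs).IsCycle := hp.rotate hzs
        obtain ⟨v₁, h₁, q, hq⟩ := SimpleGraph.Walk.not_nil_iff.mp hc2.not_nil
        have hc4 : (SimpleGraph.Walk.cons h₁ q).IsCycle := by rw [← hq]; exact hc2
        have hc3 := hc4
        rw [SimpleGraph.Walk.cons_isCycle_iff] at hc3
        obtain ⟨hqpath, hedge⟩ := hc3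
        have hqn : ¬ q.Nil := SimpleGraph.Walk.not_nil_of_ne (Ne.symm h₁.ne)
        obtain ⟨w', h₃, q₃, hq3⟩ := SimpleGraph.Walk.not_nil_iff.mp hqn
        -- h₁ : Adj z v₁ with z.1 = inl a₀ forces v₁.1 = inr b₁
        have h₁' := h₁
        rcases h₁' with ⟨a₁, b₁, hz1, hv1, he1⟩ | ⟨a₁, b₁, hz1, hv1, he1⟩
        swap
        · rw [hz] at hz1; simp at hz1
        -- h₃ : Adj v₁ w' with v₁.1 = inr b₁ forces w'.1 = inl a₂
        have h₃' := h₃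
        rcases h₃' with ⟨a₂, b₂, hv2, hw'1, he2⟩ | ⟨a₂, b₂, hv2, hw'1, he2⟩
        · rw [hv1] at hv2; simp at hv2
        have hw'ne : w' ≠ z := by
          intro hcontra
          apply hedge
          have hmem : s(v₁, w') ∈ q.edges := by
            rw [hq3, SimpleGraph.Walk.edges_cons]
            exact List.mem_cons_self
          rw [hcontra] at hmem
          rw [Sym2.eq_swap]
          exact hmem
        have ha'ne : a₂ ≠ a₀ := by
          intro h
          exact hw'ne (Subtype.ext (by rw [hw'1, h]; exact hz.symm))
        have hw's : w' ∈ (SimpleGraph.Walk.cons h₁ q).support := by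
          rw [SimpleGraph.Walk.support_cons, hq3, SimpleGraph.Walk.support_cons]
          simp
        obtain ⟨w₁, w₂, hne12, hadj1, hadj2⟩ := exists_two_neighbors hc4 hw's
        exact hne12 (hleaf w' w₁ w₂ a₂ hw'1 ha'ne hadj1 hadj2)
      · obtain ⟨w₁, w₂, hne12, hadj1, hadj2⟩ := exists_two_neighbors hp hzs
        exact hne12 (hleaf z w₁ w₂ a hz hea hadj1 hadj2)
    obtain ⟨u₁, h₁, q, hq⟩ := SimpleGraph.Walk.not_nil_iff.mp hp.not_nil
    have h₁' := h₁
    rcases h₁' with ⟨a, b, hv0, hu1, he⟩ | ⟨a, b, hv0, hu1, he⟩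
    · exact main v₀ a hv0 p.start_mem_support
    · refine main u₁ a hu1 ?_
      rw [hq, SimpleGraph.Walk.support_cons]
      exact List.mem_cons_of_mem _ q.start_mem_support


end Paper
end

section
/- Let S be a recurrent set of words over alphabet A with A ⊆ S, set k = Card(A) − 1, and let X ⊆ S be a finite S-maximal bifix code of S-degree d. If S is strong then Card(X) − 1 ≥ dk; if S is weak then Card(X) − 1 ≤ dk; if S is neutral then Card(X) − 1 = dk. -/
namespace Paper

variable {A : Type*}

/-! ### Auxiliary development for the cardinality theorem -/

section Aux
open scoped Classical

section UF
variable {X : Set (List A)}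

lemma nil_starOf : ([] : List A) ∈ starOf X := ⟨[], by simp, rfl⟩

lemma cons_starOf {x m : List A} (hx : x ∈ X) (hm : m ∈ starOf X) : x ++ m ∈ starOf X := by
  obtain ⟨ls, h1, rfl⟩ := hm
  refine ⟨x :: ls, ?_, by simp⟩
  intro u hu
  rcases List.mem_cons.1 hu with rfl | hu
  · exact hx
  · exact h1 _ hu

lemma snoc_starOf {x m : List A} (hx : x ∈ X) (hm : m ∈ starOf X) : m ++ x ∈ starOf X := by
  obtain ⟨ls, h1, rfl⟩ := hm
  refine ⟨ls ++ [x], ?_, by simp⟩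
  intro u hu; rcases List.mem_append.1 hu with h | h
  · exact h1 _ h
  · simp at h; subst h; exact hx

/-- uniqueness of greedy prefix factorization -/
lemma ufpre_unique (hX : IsPrefixCode X) :
    ∀ (ls ls' : List (List A)) (u u' : List A), (∀ a ∈ ls, a ∈ X) → (∀ a ∈ ls', a ∈ X) →
    (∀ t, t <+: u → t ∉ X) → (∀ t, t <+: u' → t ∉ X) →
    ls.flatten ++ u = ls'.flatten ++ u' → ls.flatten = ls'.flatten ∧ u = u' := by
  intro ls
  induction ls with
  | nil =>
    intro ls' u u' _ h2 h3 h4 heq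
    cases ls' with
    | nil => simpa using heq
    | cons x' t' =>
      exfalso
      simp only [List.flatten_nil, List.nil_append, List.flatten_cons, List.append_assoc] at heq
      exact h3 x' ⟨_, heq.symm⟩ (h2 x' (by simp))
  | cons x t ih =>
    intro ls' u u' h1 h2 h3 h4 heq
    cases ls' with
    | nil =>
      exfalso
      simp only [List.flatten_nil, List.nil_append, List.flatten_cons, List.append_assoc] at heq
      exact h4 x ⟨_, heq⟩ (h1 x (by simp))
    | cons x' t' =>
      simp only [List.flatten_cons, List.append_assoc] at heq ⊢
      have hx : x ∈ X := h1 x (by simp)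
      have hx' : x' ∈ X := h2 x' (by simp)
      have hcomp : x <+: x' ∨ x' <+: x :=
        List.prefix_or_prefix_of_prefix ⟨_, heq⟩ ⟨_, rfl⟩
      have hxx : x = x' := by
        rcases hcomp with h | h
        · exact hX.2 x hx x' hx' h
        · exact (hX.2 x' hx' x hx h).symm
      subst hxx
      have heq2 := List.append_cancel_left heq
      obtain ⟨e1, e2⟩ := ih t' u u' (fun a ha => h1 a (by simp [ha]))
        (fun a ha => h2 a (by simp [ha])) h3 h4 heq2
      exact ⟨by rw [e1], e2⟩

/-- existence of greedy prefix factorization -/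
lemma ufpre_exists (hne : ∀ x ∈ X, x ≠ []) :
    ∀ z : List A, ∃ m u : List A, m ∈ starOf X ∧ (∀ t, t <+: u → t ∉ X) ∧ z = m ++ u := by
  have key : ∀ n : ℕ, ∀ z : List A, z.length ≤ n →
      ∃ m u : List A, m ∈ starOf X ∧ (∀ t, t <+: u → t ∉ X) ∧ z = m ++ u := by
    intro n
    induction n with
    | zero =>
      intro z hz
      have : z = [] := List.length_eq_zero_iff.1 (Nat.le_zero.1 hz)
      subst this
      by_cases h : ([] : List A) ∈ X
      · exact absurd rfl (hne _ h)
      · exact ⟨[], [], nil_starOf, fun t ht => by simp at ht; subst ht; exact h, by simp⟩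
    | succ n ih =>
      intro z hz
      by_cases h : ∃ x ∈ X, x <+: z
      · obtain ⟨x, hx, t, rfl⟩ := h
        have hxl : 1 ≤ x.length := List.length_pos_iff.2 (hne x hx)
        have : t.length ≤ n := by simp at hz; omega
        obtain ⟨m, u, hm, hu, rfl⟩ := ih t this
        exact ⟨x ++ m, u, cons_starOf hx hm, hu, by simp⟩
      · push_neg at h
        exact ⟨[], z, nil_starOf, fun t ht hT => h t hT ht, by simp⟩
  intro z; exact key z.length z le_rfl

lemma ns_flatten_nil {v : List A} {ls : List (List A)}
    (hv : ∀ s, s <:+ v → s ∉ X) (hls : ∀ a ∈ ls, a ∈ X) (h : ls.flatten <:+ v) :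
    ls.flatten = [] := by
  induction ls using List.reverseRecOn with
  | nil => rfl
  | append_singleton l x _ =>
    exfalso
    have hx : x ∈ X := hls x (by simp)
    have : x <:+ (l ++ [x]).flatten := by simp [List.flatten_append]
    exact hv x (this.trans h) hx

/-- uniqueness of greedy suffix factorization -/
lemma ufsuf_unique (hX : IsSuffixCode X) :
    ∀ (ls ls' : List (List A)) (v v' : List A), (∀ a ∈ ls, a ∈ X) → (∀ a ∈ ls', a ∈ X) →
    (∀ s, s <:+ v → s ∉ X) → (∀ s, s <:+ v' → s ∉ X) →
    v ++ ls.flatten = v' ++ ls'.flatten → ls.flatten = ls'.flatten ∧ v = v' := by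
  intro ls
  induction ls using List.reverseRecOn with
  | nil =>
    intro ls' v v' _ h2 h3 h4 heq
    simp only [List.flatten_nil, List.append_nil] at heq
    subst heq
    have : ls'.flatten = [] := ns_flatten_nil h3 h2 ⟨_, rfl⟩
    rw [this]; simp [this]
  | append_singleton t x ih =>
    intro ls' v v' h1 h2 h3 h4 heq
    cases ls' using List.reverseRecOn with
    | nil =>
      simp only [List.flatten_nil, List.append_nil] at heq
      have : (t ++ [x]).flatten = [] := ns_flatten_nil h4 h1 ⟨_, heq⟩
      rw [this]; simp_all
    | append_singleton t' x' _ =>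
      simp only [List.flatten_append, List.flatten_cons, List.flatten_nil, List.append_nil,
        ← List.append_assoc] at heq ⊢
      have hx : x ∈ X := h1 x (by simp)
      have hx' : x' ∈ X := h2 x' (by simp)
      have hcomp : x <:+ x' ∨ x' <:+ x :=
        List.suffix_or_suffix_of_suffix ⟨_, heq⟩ ⟨_, rfl⟩
      have hxx : x = x' := by
        rcases hcomp with h | h
        · exact hX.2 x hx x' hx' h
        · exact (hX.2 x' hx' x hx h).symm
      subst hxx
      have heq2 := List.append_cancel_right heq
      obtain ⟨e1, e2⟩ := ih t' v v' (fun a ha => h1 a (by simp [ha]))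
        (fun a ha => h2 a (by simp [ha])) h3 h4 heq2
      exact ⟨by rw [e1], e2⟩

/-- existence of greedy suffix factorization -/
lemma ufsuf_exists (hne : ∀ x ∈ X, x ≠ []) :
    ∀ z : List A, ∃ v m : List A, m ∈ starOf X ∧ (∀ s, s <:+ v → s ∉ X) ∧ z = v ++ m := by
  have key : ∀ n : ℕ, ∀ z : List A, z.length ≤ n →
      ∃ v m : List A, m ∈ starOf X ∧ (∀ s, s <:+ v → s ∉ X) ∧ z = v ++ m := by
    intro n
    induction n with
    | zero =>
      intro z hz
      have : z = [] := List.length_eq_zero_iff.1 (Nat.le_zero.1 hz)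
      subst this
      by_cases h : ([] : List A) ∈ X
      · exact absurd rfl (hne _ h)
      · exact ⟨[], [], nil_starOf, fun t ht => by simp at ht; subst ht; exact h, by simp⟩
    | succ n ih =>
      intro z hz
      by_cases h : ∃ x ∈ X, x <:+ z
      · obtain ⟨x, hx, t, rfl⟩ := h
        have hxl : 1 ≤ x.length := List.length_pos_iff.2 (hne x hx)
        have : t.length ≤ n := by
          have := List.length_append (as := t) (bs := x) ▸ hz; simp at hz ⊢; omega
        obtain ⟨v, m, hm, hv, rfl⟩ := ih t this
        exact ⟨v, m ++ x, snoc_starOf hx hm, hv, by simp⟩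
      · push_neg at h
        exact ⟨z, [], nil_starOf, fun t ht hT => h t hT ht, by simp⟩
  intro z; exact key z.length z le_rfl

end UF

section PC
variable {X : Set (List A)}

noncomputable def preD (X : Set (List A)) (w : List A) : Finset (List A) :=
  w.inits.toFinset.filter (fun v => ∀ s, s <:+ v → s ∉ X)
noncomputable def sufD (X : Set (List A)) (w : List A) : Finset (List A) :=
  w.tails.toFinset.filter (fun u => ∀ t, t <+: u → t ∉ X)

lemma mem_preD {w v : List A} : v ∈ preD X w ↔ v <+: w ∧ ∀ s, s <:+ v → s ∉ X := by
  simp [preD, List.mem_inits]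
lemma mem_sufD {w u : List A} : u ∈ sufD X w ↔ u <:+ w ∧ ∀ t, t <+: u → t ∉ X := by
  simp [sufD, List.mem_tails]

lemma parseCount_eq_card_sufD (hP : IsPrefixCode X) (hS : IsSuffixCode X) (w : List A) :
    parseCount X w = (sufD X w).card := by
  have hinj : Set.InjOn (fun p : List A × List A × List A => p.2.2)
      {p | IsParse X w p} := by
    rintro ⟨v, m, u⟩ hp ⟨v', m', u'⟩ hq h
    simp only at h
    subst h
    obtain ⟨e1, h2, ⟨ls, hls, rfl⟩, h4⟩ := hp
    obtain ⟨e1', h2', ⟨ls', hls', rfl⟩, h4'⟩ := hq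
    have heq : (v ++ ls.flatten) ++ u = (v' ++ ls'.flatten) ++ u := by
      rw [← e1, ← e1']
    have heq2 := List.append_cancel_right heq
    obtain ⟨f1, f2⟩ := ufsuf_unique hS ls ls' v v' hls hls' h2 h2' heq2
    simp [f1, f2]
  have himg : (fun p : List A × List A × List A => p.2.2) '' {p | IsParse X w p}
      = ↑(sufD X w) := by
    ext u
    constructor
    · rintro ⟨⟨v, m, u0⟩, hp, rfl⟩
      simp only [Finset.coe_filter, Set.mem_setOf_eq]
      rw [Finset.mem_coe, mem_sufD]
      exact ⟨⟨v ++ m, by rw [hp.1, List.append_assoc]⟩, hp.2.2.2⟩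
    · intro hu
      rw [Finset.mem_coe, mem_sufD] at hu
      obtain ⟨⟨z, rfl⟩, hnp⟩ := hu
      obtain ⟨v, m, hm, hv, rfl⟩ := ufsuf_exists hP.1 z
      exact ⟨⟨v, m, u⟩, ⟨by simp, hv, hm, hnp⟩, rfl⟩
  rw [parseCount, ← Set.ncard_image_of_injOn hinj, himg, Set.ncard_coe_finset]

lemma parseCount_eq_card_preD (hP : IsPrefixCode X) (hS : IsSuffixCode X) (w : List A) :
    parseCount X w = (preD X w).card := by
  have hinj : Set.InjOn (fun p : List A × List A × List A => p.1)
      {p | IsParse X w p} := by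
    rintro ⟨v, m, u⟩ hp ⟨v', m', u'⟩ hq h
    simp only at h
    subst h
    obtain ⟨e1, h2, ⟨ls, hls, rfl⟩, h4⟩ := hp
    obtain ⟨e1', h2', ⟨ls', hls', rfl⟩, h4'⟩ := hq
    have heq : v ++ (ls.flatten ++ u) = v ++ (ls'.flatten ++ u') := by
      rw [← List.append_assoc, ← List.append_assoc, ← e1, ← e1']
    have heq2 := List.append_cancel_left heq
    obtain ⟨f1, f2⟩ := ufpre_unique hP ls ls' u u' hls hls' h4 h4' heq2
    simp [f1, f2]
  have himg : (fun p : List A × List A × List A => p.1) '' {p | IsParse X w p}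
      = ↑(preD X w) := by
    ext v
    constructor
    · rintro ⟨⟨v0, m, u⟩, hp, rfl⟩
      rw [Finset.mem_coe, mem_preD]
      exact ⟨⟨m ++ u, by rw [hp.1, List.append_assoc]⟩, hp.2.1⟩
    · intro hv
      rw [Finset.mem_coe, mem_preD] at hv
      obtain ⟨⟨z, rfl⟩, hns⟩ := hv
      obtain ⟨m, u, hm, hu, rfl⟩ := ufpre_exists hP.1 z
      exact ⟨⟨v, m, u⟩, ⟨by simp, hns, hm, hu⟩, rfl⟩
  rw [parseCount, ← Set.ncard_image_of_injOn hinj, himg, Set.ncard_coe_finset]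

lemma preD_mono {v w : List A} (h : v <+: w) : preD X v ⊆ preD X w := by
  intro u hu; rw [mem_preD] at hu ⊢; exact ⟨hu.1.trans h, hu.2⟩

lemma sufD_mono {v w : List A} (h : v <:+ w) : sufD X v ⊆ sufD X w := by
  intro u hu; rw [mem_sufD] at hu ⊢; exact ⟨hu.1.trans h, hu.2⟩

lemma prefix_concat_self (w : List A) (a : A) : w <+: w ++ [a] := ⟨[a], rfl⟩

lemma preD_concat (w : List A) (a : A) :
    (preD X (w ++ [a])).card =
      (preD X w).card + (if ∀ s, s <:+ w ++ [a] → s ∉ X then 1 else 0) := by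
  by_cases hc : ∀ s, s <:+ w ++ [a] → s ∉ X
  · have hset : preD X (w ++ [a]) = insert (w ++ [a]) (preD X w) := by
      ext v
      rw [mem_preD, Finset.mem_insert, mem_preD]
      constructor
      · rintro ⟨hp, hns⟩
        rcases List.prefix_concat_iff.1 hp with h | h
        · exact Or.inl h
        · exact Or.inr ⟨h, hns⟩
      · rintro (rfl | ⟨hp, hns⟩)
        · exact ⟨List.prefix_refl _, hc⟩
        · exact ⟨hp.trans (prefix_concat_self w a), hns⟩
    rw [hset, if_pos hc, Finset.card_insert_of_notMem, add_comm]
    intro hmem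
    have := (mem_preD.1 hmem).1.length_le
    simp at this
  · have hset : preD X (w ++ [a]) = preD X w := by
      ext v
      rw [mem_preD, mem_preD]
      constructor
      · rintro ⟨hp, hns⟩
        rcases List.prefix_concat_iff.1 hp with h | h
        · subst h; exact absurd hns hc
        · exact ⟨h, hns⟩
      · rintro ⟨hp, hns⟩
        exact ⟨hp.trans (prefix_concat_self w a), hns⟩
    rw [hset, if_neg hc, add_zero]

lemma sufD_cons (a : A) (w : List A) :
    (sufD X (a :: w)).card =
      (sufD X w).card + (if ∀ t, t <+: a :: w → t ∉ X then 1 else 0) := by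
  by_cases hc : ∀ t, t <+: a :: w → t ∉ X
  · have hset : sufD X (a :: w) = insert (a :: w) (sufD X w) := by
      ext u
      rw [mem_sufD, Finset.mem_insert, mem_sufD]
      constructor
      · rintro ⟨hp, hns⟩
        rcases List.suffix_cons_iff.1 hp with h | h
        · exact Or.inl h
        · exact Or.inr ⟨h, hns⟩
      · rintro (rfl | ⟨hp, hns⟩)
        · exact ⟨List.suffix_refl _, hc⟩
        · exact ⟨hp.trans (List.suffix_cons _ _), hns⟩
    rw [hset, if_pos hc, Finset.card_insert_of_notMem, add_comm]
    intro hmem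
    have := (mem_sufD.1 hmem).1.length_le
    simp at this
  · have hset : sufD X (a :: w) = sufD X w := by
      ext u
      rw [mem_sufD, mem_sufD]
      constructor
      · rintro ⟨hp, hns⟩
        rcases List.suffix_cons_iff.1 hp with h | h
        · subst h; exact absurd hns hc
        · exact ⟨h, hns⟩
      · rintro ⟨hp, hns⟩
        exact ⟨hp.trans (List.suffix_cons _ _), hns⟩
    rw [hset, if_neg hc, add_zero]

end PC

section SBasics
variable {S : Set (List A)} {X : Finset (List A)} {d : ℕ}

lemma exists_ne_nil (hrec : Recurrent S) : ∃ u ∈ S, u ≠ [] := by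
  by_contra h
  push_neg at h
  obtain ⟨w, hw⟩ := hrec.2.2.1
  apply hrec.2.1
  ext x
  simp only [Set.mem_singleton_iff]
  constructor
  · exact h x
  · rintro rfl; rw [← h w hw]; exact hw

lemma nil_mem_S (hrec : Recurrent S) : [] ∈ S := by
  obtain ⟨w, hw⟩ := hrec.2.2.1
  exact hrec.1 w hw [] List.nil_infix

lemma right_ext (hrec : Recurrent S) {w : List A} (hw : w ∈ S) : ∃ a, w ++ [a] ∈ S := by
  obtain ⟨u, hu, hune⟩ := exists_ne_nil hrec
  obtain ⟨v, hv⟩ := hrec.2.2.2 w hw u hu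
  set z := v ++ u with hz
  have hzne : z ≠ [] := by simp [hz, hune]
  have hwz : w ++ z ∈ S := by rw [hz, ← List.append_assoc]; exact hv
  refine ⟨z.head hzne, hrec.1 _ hwz _ ⟨[], z.tail, ?_⟩⟩
  conv_rhs => rw [← List.cons_head_tail hzne]
  simp

lemma left_ext (hrec : Recurrent S) {w : List A} (hw : w ∈ S) : ∃ a, a :: w ∈ S := by
  obtain ⟨u, hu, hune⟩ := exists_ne_nil hrec
  obtain ⟨v, hv⟩ := hrec.2.2.2 u hu w hw
  set z := u ++ v with hz
  have hzne : z ≠ [] := by simp [hz, hune]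
  have hwz : z ++ w ∈ S := by rw [hz]; exact hv
  refine ⟨z.getLast hzne, hrec.1 _ hwz _ ⟨z.dropLast, [], ?_⟩⟩
  conv_rhs => rw [← List.dropLast_append_getLast hzne]
  simp

lemma X_nonempty (hmax : IsSMaximalBifixCode S (↑X : Set (List A)))
    (halph : ∀ a : A, [a] ∈ S) (a₀ : A) : X.Nonempty := by
  by_contra h
  rw [Finset.not_nonempty_iff_eq_empty] at h
  have hY : IsBifixCode ({[a₀]} : Set (List A)) := by
    refine ⟨⟨?_, ?_⟩, ⟨?_, ?_⟩⟩
    · intro x hx; rw [Set.mem_singleton_iff] at hx; subst hx; simp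
    · intro x hx y hy _; rw [Set.mem_singleton_iff] at hx hy; rw [hx, hy]
    · intro x hx; rw [Set.mem_singleton_iff] at hx; subst hx; simp
    · intro x hx y hy _; rw [Set.mem_singleton_iff] at hx hy; rw [hx, hy]
  have h2 := hmax.2.2 {[a₀]} hY
    (by intro x hx; rw [Set.mem_singleton_iff] at hx; subst hx; exact halph a₀)
    (by rw [h]; simp)
  have hmem : [a₀] ∈ ({[a₀]} : Set (List A)) := rfl
  rw [h2, h] at hmem
  simp at hmem

/-- pumping: no word of `S` is two-sided prefix-incomparable with `X` -/
lemma no_prefix_incomparable (hrec : Recurrent S)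
    (hd1 : ∀ w ∈ S, parseCount (↑X : Set (List A)) w ≤ d)
    (hP : IsPrefixCode (↑X : Set (List A))) (hS : IsSuffixCode (↑X : Set (List A)))
    {y : List A} (hy : y ∈ S) (hyne : y ≠ [])
    (hinc : ∀ x ∈ X, ¬ x <+: y ∧ ¬ y <+: x) : False := by
  have key : ∀ w : List A, y <+: w → ∀ t, t <+: w → t ∉ (↑X : Set (List A)) := by
    intro w hyw t htw htX
    rcases List.prefix_or_prefix_of_prefix htw hyw with h | h
    · exact (hinc t htX).1 h
    · exact (hinc t htX).2 h
  have claim : ∀ n : ℕ, ∃ z ∈ S, y <+: z ∧ n + 1 ≤ (sufD (↑X : Set (List A)) z).card := by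
    intro n
    induction n with
    | zero =>
      refine ⟨y, hy, List.prefix_refl y, ?_⟩
      exact Finset.card_pos.2 ⟨y, mem_sufD.2 ⟨List.suffix_refl y, key y (List.prefix_refl y)⟩⟩
    | succ n ih =>
      obtain ⟨z, hz, hyz, hcard⟩ := ih
      obtain ⟨v, hv⟩ := hrec.2.2.2 y hy z hz
      set z' := y ++ v ++ z with hz'
      have hz'S : z' ∈ S := hv
      have hyz' : y <+: z' := by
        rw [hz', List.append_assoc]; exact List.prefix_append y _
      have hsub : sufD (↑X : Set (List A)) z ⊆ sufD (↑X : Set (List A)) z' :=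
        sufD_mono ⟨y ++ v, by rw [hz', List.append_assoc]⟩
      have hz'mem : z' ∈ sufD (↑X : Set (List A)) z' :=
        mem_sufD.2 ⟨List.suffix_refl _, key z' hyz'⟩
      have hz'notmem : z' ∉ sufD (↑X : Set (List A)) z := by
        intro hmem
        have h1 := (mem_sufD.1 hmem).1.length_le
        have h2 : z'.length = y.length + (v.length + z.length) := by simp [hz']
        have hylen : 1 ≤ y.length := List.length_pos_iff.2 hyne
        omega
      refine ⟨z', hz'S, hyz', ?_⟩
      calc n + 1 + 1 ≤ (insert z' (sufD (↑X : Set (List A)) z)).card := by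
            rw [Finset.card_insert_of_notMem hz'notmem]; omega
        _ ≤ (sufD (↑X : Set (List A)) z').card :=
            Finset.card_le_card (Finset.insert_subset hz'mem hsub)
  obtain ⟨z, hz, _, hcard⟩ := claim d
  have := hd1 z hz
  rw [parseCount_eq_card_sufD hP hS] at this
  omega

lemma no_suffix_incomparable (hrec : Recurrent S)
    (hd1 : ∀ w ∈ S, parseCount (↑X : Set (List A)) w ≤ d)
    (hP : IsPrefixCode (↑X : Set (List A))) (hS : IsSuffixCode (↑X : Set (List A)))
    {y : List A} (hy : y ∈ S) (hyne : y ≠ [])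
    (hinc : ∀ x ∈ X, ¬ x <:+ y ∧ ¬ y <:+ x) : False := by
  have key : ∀ w : List A, y <:+ w → ∀ t, t <:+ w → t ∉ (↑X : Set (List A)) := by
    intro w hyw t htw htX
    rcases List.suffix_or_suffix_of_suffix htw hyw with h | h
    · exact (hinc t htX).1 h
    · exact (hinc t htX).2 h
  have claim : ∀ n : ℕ, ∃ z ∈ S, y <:+ z ∧ n + 1 ≤ (preD (↑X : Set (List A)) z).card := by
    intro n
    induction n with
    | zero =>
      exact ⟨y, hy, List.suffix_refl y,
        Finset.card_pos.2 ⟨y, mem_preD.2 ⟨List.prefix_refl y, key y (List.suffix_refl y)⟩⟩⟩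
    | succ n ih =>
      obtain ⟨z, hz, hyz, hcard⟩ := ih
      obtain ⟨v, hv⟩ := hrec.2.2.2 z hz y hy
      set z' := z ++ v ++ y with hz'
      have hz'S : z' ∈ S := hv
      have hyz' : y <:+ z' := ⟨z ++ v, rfl⟩
      have hsub : preD (↑X : Set (List A)) z ⊆ preD (↑X : Set (List A)) z' :=
        preD_mono (by rw [hz', List.append_assoc]; exact List.prefix_append z _)
      have hz'mem : z' ∈ preD (↑X : Set (List A)) z' :=
        mem_preD.2 ⟨List.prefix_refl _, key z' hyz'⟩
      have hz'notmem : z' ∉ preD (↑X : Set (List A)) z := by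
        intro hmem
        have h1 := (mem_preD.1 hmem).1.length_le
        have h2 : z'.length = z.length + (v.length + y.length) := by simp [hz']
        have hylen : 1 ≤ y.length := List.length_pos_iff.2 hyne
        omega
      refine ⟨z', hz'S, hyz', ?_⟩
      calc n + 1 + 1 ≤ (insert z' (preD (↑X : Set (List A)) z)).card := by
            rw [Finset.card_insert_of_notMem hz'notmem]; omega
        _ ≤ (preD (↑X : Set (List A)) z').card :=
            Finset.card_le_card (Finset.insert_subset hz'mem hsub)
  obtain ⟨z, hz, _, hcard⟩ := claim d
  have := hd1 z hz
  rw [parseCount_eq_card_preD hP hS] at this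
  omega

end SBasics

section Dich
variable {S : Set (List A)} {X : Finset (List A)} {d L : ℕ}

lemma prefix_dichotomy (hrec : Recurrent S)
    (hd1 : ∀ w ∈ S, parseCount (↑X : Set (List A)) w ≤ d)
    (hP : IsPrefixCode (↑X : Set (List A))) (hS : IsSuffixCode (↑X : Set (List A)))
    (hXne : X.Nonempty) {w : List A} (hw : w ∈ S) :
    (∃ x ∈ X, x <+: w) ∨ (∃ x ∈ X, w <+: x ∧ w ≠ x) := by
  by_cases hwnil : w = []
  · subst hwnil
    obtain ⟨x, hx⟩ := hXne
    right
    exact ⟨x, hx, List.nil_prefix, fun h => hP.1 x hx h.symm⟩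
  · by_contra h
    push_neg at h
    refine no_prefix_incomparable hrec hd1 hP hS hw hwnil ?_
    intro x hx
    refine ⟨h.1 x hx, fun hwx => ?_⟩
    have hx2 := h.2 x hx hwx
    exact h.1 x hx (show x <+: w by rw [← hx2])

lemma suffix_dichotomy (hrec : Recurrent S)
    (hd1 : ∀ w ∈ S, parseCount (↑X : Set (List A)) w ≤ d)
    (hP : IsPrefixCode (↑X : Set (List A))) (hS : IsSuffixCode (↑X : Set (List A)))
    (hXne : X.Nonempty) {w : List A} (hw : w ∈ S) :
    (∃ x ∈ X, x <:+ w) ∨ (∃ x ∈ X, w <:+ x ∧ w ≠ x) := by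
  by_cases hwnil : w = []
  · subst hwnil
    obtain ⟨x, hx⟩ := hXne
    right
    exact ⟨x, hx, List.nil_suffix, fun h => hS.1 x hx h.symm⟩
  · by_contra h
    push_neg at h
    refine no_suffix_incomparable hrec hd1 hP hS hw hwnil ?_
    intro x hx
    refine ⟨h.1 x hx, fun hwx => ?_⟩
    have hx2 := h.2 x hx hwx
    exact h.1 x hx (show x <:+ w by rw [← hx2])

lemma long_has_prefix (hrec : Recurrent S)
    (hd1 : ∀ w ∈ S, parseCount (↑X : Set (List A)) w ≤ d)
    (hP : IsPrefixCode (↑X : Set (List A))) (hS : IsSuffixCode (↑X : Set (List A)))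
    (hXne : X.Nonempty) (hL : ∀ x ∈ X, x.length ≤ L)
    {w : List A} (hw : w ∈ S) (hlen : L < w.length) : ∃ x ∈ X, x <+: w := by
  rcases prefix_dichotomy hrec hd1 hP hS hXne hw with h | ⟨x, hx, hpre, _⟩
  · exact h
  · exact absurd (hpre.length_le.trans (hL x hx)) (by omega)

lemma long_has_suffix (hrec : Recurrent S)
    (hd1 : ∀ w ∈ S, parseCount (↑X : Set (List A)) w ≤ d)
    (hP : IsPrefixCode (↑X : Set (List A))) (hS : IsSuffixCode (↑X : Set (List A)))
    (hXne : X.Nonempty) (hL : ∀ x ∈ X, x.length ≤ L)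
    {w : List A} (hw : w ∈ S) (hlen : L < w.length) : ∃ x ∈ X, x <:+ w := by
  rcases suffix_dichotomy hrec hd1 hP hS hXne hw with h | ⟨x, hx, hpre, _⟩
  · exact h
  · exact absurd (hpre.length_le.trans (hL x hx)) (by omega)

lemma pc_mono_prefix (hP : IsPrefixCode (↑X : Set (List A)))
    (hS : IsSuffixCode (↑X : Set (List A))) {u w : List A} (h : u <+: w) :
    parseCount (↑X : Set (List A)) u ≤ parseCount (↑X : Set (List A)) w := by
  rw [parseCount_eq_card_preD hP hS, parseCount_eq_card_preD hP hS]
  exact Finset.card_le_card (preD_mono h)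

lemma pc_eq_of_long_prefix (hrec : Recurrent S)
    (hd1 : ∀ w ∈ S, parseCount (↑X : Set (List A)) w ≤ d)
    (hP : IsPrefixCode (↑X : Set (List A))) (hS : IsSuffixCode (↑X : Set (List A)))
    (hXne : X.Nonempty) (hL : ∀ x ∈ X, x.length ≤ L) :
    ∀ n (w : List A), w.length ≤ n → w ∈ S → ∀ u, u <+: w → L ≤ u.length →
      parseCount (↑X : Set (List A)) w = parseCount (↑X : Set (List A)) u := by
  intro n
  induction n with
  | zero =>
    intro w hwn _ u hu _
    have hw0 : w = [] := List.length_eq_zero_iff.1 (Nat.le_zero.1 hwn)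
    subst hw0
    rw [List.prefix_nil.1 hu]
  | succ n ih =>
    intro w hwn hw u hu hul
    by_cases heq : u.length = w.length
    · rw [hu.eq_of_length heq]
    · have hlt : u.length < w.length := lt_of_le_of_ne hu.length_le heq
      have hwne : w ≠ [] := by
        intro h; subst h; simp at hlt
      have hwform : w = w.dropLast ++ [w.getLast hwne] :=
        (List.dropLast_append_getLast hwne).symm
      have hupre : u <+: w.dropLast := by
        rw [List.dropLast_eq_take]
        exact List.prefix_take_iff.2 ⟨hu, by omega⟩
      have hdS : w.dropLast ∈ S := hrec.1 w hw _ (List.dropLast_prefix w).isInfix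
      have hcond : ¬ ∀ s, s <:+ w.dropLast ++ [w.getLast hwne] →
          s ∉ (↑X : Set (List A)) := by
        intro hall
        obtain ⟨x, hx, hsuf⟩ := long_has_suffix hrec hd1 hP hS hXne hL hw (by omega)
        exact hall x (hwform ▸ hsuf) hx
      have step : parseCount (↑X : Set (List A)) w
          = parseCount (↑X : Set (List A)) w.dropLast := by
        conv_lhs => rw [hwform]
        rw [parseCount_eq_card_preD hP hS, parseCount_eq_card_preD hP hS,
          preD_concat, if_neg hcond, add_zero]
      rw [step]
      exact ih w.dropLast (by rw [List.length_dropLast]; omega) hdS u hupre hul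

lemma pc_eq_of_long_suffix (hrec : Recurrent S)
    (hd1 : ∀ w ∈ S, parseCount (↑X : Set (List A)) w ≤ d)
    (hP : IsPrefixCode (↑X : Set (List A))) (hS : IsSuffixCode (↑X : Set (List A)))
    (hXne : X.Nonempty) (hL : ∀ x ∈ X, x.length ≤ L) :
    ∀ n (w : List A), w.length ≤ n → w ∈ S → ∀ u, u <:+ w → L ≤ u.length →
      parseCount (↑X : Set (List A)) w = parseCount (↑X : Set (List A)) u := by
  intro n
  induction n with
  | zero =>
    intro w hwn _ u hu _
    have hw0 : w = [] := List.length_eq_zero_iff.1 (Nat.le_zero.1 hwn)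
    subst hw0
    rw [List.suffix_nil.1 hu]
  | succ n ih =>
    intro w hwn hw u hu hul
    by_cases heq : u.length = w.length
    · rw [List.IsSuffix.eq_of_length hu heq]
    · have hlt : u.length < w.length := lt_of_le_of_ne hu.length_le heq
      cases w with
      | nil => simp at hlt
      | cons a t =>
        have hut : u <:+ t := by
          rcases List.suffix_cons_iff.1 hu with h | h
          · exfalso; rw [h] at hlt; simp at hlt
          · exact h
        have htS : t ∈ S := hrec.1 _ hw _ (List.tail_suffix (a :: t)).isInfix
        have hcond : ¬ ∀ s, s <+: a :: t → s ∉ (↑X : Set (List A)) := by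
          intro hall
          obtain ⟨x, hx, hpre⟩ := long_has_prefix hrec hd1 hP hS hXne hL hw
            (by omega)
          exact hall x hpre hx
        have step : parseCount (↑X : Set (List A)) (a :: t)
            = parseCount (↑X : Set (List A)) t := by
          rw [parseCount_eq_card_sufD hP hS, parseCount_eq_card_sufD hP hS,
            sufD_cons, if_neg hcond, add_zero]
        rw [step]
        exact ih t (by simp at hwn; omega) htS u hut hul

lemma pc_const (hrec : Recurrent S) (hd : SDegreeIs S (↑X : Set (List A)) d)
    (hP : IsPrefixCode (↑X : Set (List A))) (hS : IsSuffixCode (↑X : Set (List A)))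
    (hXne : X.Nonempty) (hL : ∀ x ∈ X, x.length ≤ L) :
    ∀ w ∈ S, L ≤ w.length → parseCount (↑X : Set (List A)) w = d := by
  have hd1 := hd.1
  obtain ⟨w0, hw0, hpc0⟩ := hd.2
  have grow : ∀ n : ℕ, ∃ z ∈ S, w0 <+: z ∧ n ≤ z.length := by
    intro n
    induction n with
    | zero => exact ⟨w0, hw0, List.prefix_refl w0, Nat.zero_le _⟩
    | succ n ihg =>
      obtain ⟨z, hz, hp, hl⟩ := ihg
      obtain ⟨a, ha⟩ := right_ext hrec hz
      exact ⟨z ++ [a], ha, hp.trans ⟨[a], rfl⟩, by simp; omega⟩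
  obtain ⟨w1, hw1, hp1, hl1⟩ := grow L
  have hpc1 : parseCount (↑X : Set (List A)) w1 = d := by
    refine le_antisymm (hd1 w1 hw1) ?_
    calc d = parseCount (↑X : Set (List A)) w0 := hpc0.symm
      _ ≤ parseCount (↑X : Set (List A)) w1 := pc_mono_prefix hP hS hp1
  intro w hw hlen
  obtain ⟨v, hv⟩ := hrec.2.2.2 w hw w1 hw1
  have h1 : parseCount (↑X : Set (List A)) (w ++ v ++ w1)
      = parseCount (↑X : Set (List A)) w :=
    pc_eq_of_long_prefix hrec hd1 hP hS hXne hL _ _ le_rfl hv w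
      (by rw [List.append_assoc]; exact List.prefix_append w _) hlen
  have h2 : parseCount (↑X : Set (List A)) (w ++ v ++ w1)
      = parseCount (↑X : Set (List A)) w1 :=
    pc_eq_of_long_suffix hrec hd1 hP hS hXne hL _ _ le_rfl hv w1 ⟨w ++ v, rfl⟩ hl1
  rw [← h1, h2, hpc1]

end Dich

section Counting
variable [Fintype A] {S : Set (List A)} {X : Finset (List A)} {d L : ℕ}

/-- all words of length `n` -/
noncomputable def lenF (A : Type*) [Fintype A] (n : ℕ) : Finset (List A) :=
  (Finset.univ : Finset (List.Vector A n)).image List.Vector.toList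

lemma mem_lenF {n : ℕ} {w : List A} : w ∈ lenF A n ↔ w.length = n := by
  simp only [lenF, Finset.mem_image, Finset.mem_univ, true_and]
  constructor
  · rintro ⟨v, rfl⟩; exact v.2
  · intro h; exact ⟨⟨w, h⟩, rfl⟩

/-- words of `S` of length `n` -/
noncomputable def SnF [Fintype A] (S : Set (List A)) (n : ℕ) : Finset (List A) :=
  (lenF A n).filter (· ∈ S)

lemma mem_SnF {n : ℕ} {w : List A} : w ∈ SnF S n ↔ w ∈ S ∧ w.length = n := by
  simp [SnF, mem_lenF, and_comm]

/-- left extensions of `p` of length `i` -/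
noncomputable def LnF [Fintype A] (S : Set (List A)) (i : ℕ) (p : List A) : Finset (List A) :=
  (lenF A i).filter (fun u => u ++ p ∈ S)

lemma mem_LnF {i : ℕ} {p u : List A} : u ∈ LnF S i p ↔ u.length = i ∧ u ++ p ∈ S := by
  simp [LnF, mem_lenF]

noncomputable def lFn [Fintype A] (S : Set (List A)) (w : List A) : Finset A :=
  Finset.univ.filter (fun a => a :: w ∈ S)

noncomputable def rC [Fintype A] (S : Set (List A)) (w : List A) : ℕ :=
  (Finset.univ.filter (fun a : A => w ++ [a] ∈ S)).card

noncomputable def lC [Fintype A] (S : Set (List A)) (w : List A) : ℕ := (lFn S w).card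

noncomputable def eC [Fintype A] (S : Set (List A)) (w : List A) : ℕ :=
  (Finset.univ.filter (fun q : A × A => q.1 :: (w ++ [q.2]) ∈ S)).card

noncomputable def mZ [Fintype A] (S : Set (List A)) (w : List A) : ℤ :=
  (eC S w : ℤ) - lC S w - rC S w + 1

lemma Rext_ncard (w : List A) : (Rext S w).ncard = rC S w := by
  have : Rext S w = ↑(Finset.univ.filter (fun a : A => w ++ [a] ∈ S)) := by
    ext a; simp [Rext]
  rw [this, Set.ncard_coe_finset, rC]

lemma Lext_ncard (w : List A) : (Lext S w).ncard = lC S w := by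
  have : Lext S w = ↑(Finset.univ.filter (fun a : A => a :: w ∈ S)) := by
    ext a; simp [Lext]
  rw [this, Set.ncard_coe_finset, lC, lFn]

lemma Eext_ncard (w : List A) : (Eext S w).ncard = eC S w := by
  have : Eext S w = ↑(Finset.univ.filter (fun q : A × A => q.1 :: (w ++ [q.2]) ∈ S)) := by
    ext q; simp [Eext]
  rw [this, Set.ncard_coe_finset, eC]

lemma sum_rC_cons (hfac : Factorial S) (w : List A) :
    ∑ a ∈ lFn S w, (rC S (a :: w) : ℤ) = (eC S w : ℤ) := by
  have hnat : ∑ a ∈ lFn S w, rC S (a :: w) = eC S w := by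
    unfold rC
    rw [← Finset.card_sigma]
    apply Finset.card_bij (fun q _ => ((q.1, q.2) : A × A))
    · rintro ⟨a, b⟩ hq
      simp only [Finset.mem_sigma, lFn, Finset.mem_filter, Finset.mem_univ, true_and] at hq
      simp only [Finset.mem_filter, Finset.mem_univ, true_and]
      have : (a :: w) ++ [b] = a :: (w ++ [b]) := by simp
      rw [← this]; exact hq.2
    · rintro ⟨a, b⟩ _ ⟨a', b'⟩ _ h
      simp only [Prod.mk.injEq] at h
      simp [Sigma.ext_iff, h.1, h.2]
    · rintro ⟨a, b⟩ hab
      simp only [Finset.mem_filter, Finset.mem_univ, true_and] at hab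
      refine ⟨⟨a, b⟩, ?_, rfl⟩
      simp only [Finset.mem_sigma, lFn, Finset.mem_filter, Finset.mem_univ, true_and]
      constructor
      · exact hfac _ hab (a :: w) ⟨[], [b], by simp⟩
      · have : (a :: w) ++ [b] = a :: (w ++ [b]) := by simp
        rw [this]; exact hab
  exact_mod_cast congrArg (Nat.cast : ℕ → ℤ) hnat

lemma LnF_succ_sum (hfac : Factorial S) (i : ℕ) (p : List A) (g : List A → ℤ) :
    ∑ u ∈ LnF S (i+1) p, g (u ++ p)
      = ∑ u ∈ LnF S i p, ∑ a ∈ lFn S (u ++ p), g (a :: (u ++ p)) := by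
  rw [← Finset.sum_sigma (LnF S i p) (fun u => lFn S (u ++ p))
    (fun q => g (q.2 :: (q.1 ++ p)))]
  refine (Finset.sum_bij (fun (q : Σ _ : List A, A) _ => q.2 :: q.1) ?_ ?_ ?_ ?_).symm
  · rintro ⟨u, a⟩ hq
    simp only [Finset.mem_sigma, mem_LnF, lFn, Finset.mem_filter, Finset.mem_univ,
      true_and] at hq
    rw [mem_LnF]
    refine ⟨by simp [hq.1.1], ?_⟩
    have : (a :: u) ++ p = a :: (u ++ p) := by simp
    rw [this]; exact hq.2
  · rintro ⟨u, a⟩ _ ⟨u', a'⟩ _ h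
    simp only [List.cons.injEq] at h
    simp [Sigma.ext_iff, h.1, h.2]
  · intro u hu
    rw [mem_LnF] at hu
    cases u with
    | nil => simp at hu
    | cons a t =>
      refine ⟨⟨t, a⟩, ?_, rfl⟩
      simp only [Finset.mem_sigma, mem_LnF, lFn, Finset.mem_filter, Finset.mem_univ, true_and]
      have h1 : (a :: t) ++ p = a :: (t ++ p) := by simp
      rw [h1] at hu
      refine ⟨⟨by simpa using hu.1, ?_⟩, hu.2⟩
      exact hfac _ hu.2 (t ++ p) ⟨[a], [], by simp⟩
  · rintro ⟨u, a⟩ hq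
    simp

noncomputable def fI (S : Set (List A)) [Fintype A] (i : ℕ) (p : List A) : ℤ :=
  ∑ u ∈ LnF S i p, ((rC S (u ++ p) : ℤ) - 1)

lemma fI_succ (hfac : Factorial S) (i : ℕ) (p : List A) :
    fI S (i+1) p = fI S i p + ∑ u ∈ LnF S i p, mZ S (u ++ p) := by
  rw [fI, LnF_succ_sum hfac i p (fun w => (rC S w : ℤ) - 1), fI, ← Finset.sum_add_distrib]
  apply Finset.sum_congr rfl
  intro u hu
  rw [Finset.sum_sub_distrib, Finset.sum_const, sum_rC_cons hfac]
  rw [mZ]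
  have : (lFn S (u ++ p)).card = lC S (u ++ p) := rfl
  rw [this]
  push_cast
  ring

lemma fI_zero {p : List A} (hp : p ∈ S) : fI S 0 p = (rC S p : ℤ) - 1 := by
  have : LnF S 0 p = {[]} := by
    ext u
    rw [mem_LnF]
    simp only [List.length_eq_zero_iff, Finset.mem_singleton]
    constructor
    · rintro ⟨rfl, _⟩; rfl
    · rintro rfl; exact ⟨rfl, by simpa using hp⟩
  rw [fI, this, Finset.sum_singleton]
  simp

lemma fI_telescope (hfac : Factorial S) (j : ℕ) (p : List A) :
    fI S j p = fI S 0 p + ∑ i ∈ Finset.range j, ∑ u ∈ LnF S i p, mZ S (u ++ p) := by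
  induction j with
  | zero => simp
  | succ j ih => rw [fI_succ hfac, ih, Finset.sum_range_succ]; ring

lemma collapse1 (i : ℕ) (p : List A) (g : List A → ℤ) :
    ∑ u ∈ LnF S i p, g (u ++ p)
      = ∑ w ∈ (SnF S (i + p.length)).filter (fun w => p <:+ w), g w := by
  apply Finset.sum_bij (fun u _ => u ++ p)
  · intro u hu
    rw [mem_LnF] at hu
    rw [Finset.mem_filter, mem_SnF]
    exact ⟨⟨hu.2, by simp [hu.1]⟩, ⟨u, rfl⟩⟩
  · intro u _ u' _ h
    exact List.append_cancel_right h
  · intro w hw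
    rw [Finset.mem_filter, mem_SnF] at hw
    obtain ⟨⟨hwS, hwl⟩, u, rfl⟩ := hw
    refine ⟨u, ?_, rfl⟩
    rw [mem_LnF]
    have := List.length_append (as := u) (bs := p)
    exact ⟨by omega, hwS⟩
  · intro u _; rfl

lemma swap_sum (s t : Finset (List A)) (g : List A → ℤ) :
    ∑ p ∈ s, ∑ w ∈ t.filter (fun w => p <:+ w), g w
      = ∑ w ∈ t, ((s.filter (fun p => p <:+ w)).card : ℤ) * g w := by
  have h1 : ∀ p, ∑ w ∈ t.filter (fun w => p <:+ w), g w
      = ∑ w ∈ t, if p <:+ w then g w else 0 := fun p => Finset.sum_filter _ _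
  simp only [h1]
  rw [Finset.sum_comm]
  apply Finset.sum_congr rfl
  intro w _
  rw [← Finset.sum_filter, Finset.sum_const, nsmul_eq_mul]

end Counting

section PFsec
variable [Fintype A] {S : Set (List A)} {X : Finset (List A)} {d L : ℕ}

noncomputable def PF (X : Finset (List A)) : Finset (List A) :=
  X.biUnion (fun x => x.dropLast.inits.toFinset)

lemma mem_PF (hne : ∀ x ∈ X, x ≠ []) {p : List A} :
    p ∈ PF X ↔ ∃ x ∈ X, p <+: x ∧ p ≠ x := by
  simp only [PF, Finset.mem_biUnion, List.mem_toFinset, List.mem_inits]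
  constructor
  · rintro ⟨x, hx, hp⟩
    refine ⟨x, hx, hp.trans (List.dropLast_prefix x), ?_⟩
    rintro rfl
    have h1 := hp.length_le
    have h2 : p.dropLast.length = p.length - 1 := List.length_dropLast (xs := p)
    have h3 : 1 ≤ p.length := List.length_pos_iff.2 (hne p hx)
    omega
  · rintro ⟨x, hx, hp, hne'⟩
    refine ⟨x, hx, ?_⟩
    rw [List.dropLast_eq_take]
    refine List.prefix_take_iff.2 ⟨hp, ?_⟩
    have h1 := hp.length_le
    have : p.length ≠ x.length := fun h => hne' (hp.eq_of_length h)
    omega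

lemma PF_subset_S (hfac : Factorial S) (hXS : (↑X : Set (List A)) ⊆ S)
    (hne : ∀ x ∈ X, x ≠ []) : ∀ p ∈ PF X, p ∈ S := by
  intro p hp
  obtain ⟨x, hx, hpre, _⟩ := (mem_PF hne).1 hp
  exact hfac x (hXS (Finset.mem_coe.2 hx)) p hpre.isInfix

lemma PF_noXprefix (hP : IsPrefixCode (↑X : Set (List A))) (hne : ∀ x ∈ X, x ≠ [])
    {p : List A} (hp : p ∈ PF X) : ∀ t, t <+: p → t ∉ (↑X : Set (List A)) := by
  intro t ht htX
  obtain ⟨x, hx, hpre, hne'⟩ := (mem_PF hne).1 hp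
  have hteq : t = x := hP.2 t htX x (Finset.mem_coe.2 hx) (ht.trans hpre)
  subst hteq
  exact hne' (hpre.eq_of_length (le_antisymm hpre.length_le ht.length_le))

lemma mem_PF_of_noXprefix (hrec : Recurrent S)
    (hd1 : ∀ w ∈ S, parseCount (↑X : Set (List A)) w ≤ d)
    (hP : IsPrefixCode (↑X : Set (List A))) (hS : IsSuffixCode (↑X : Set (List A)))
    (hXne : X.Nonempty) (hne : ∀ x ∈ X, x ≠ []) {w : List A} (hw : w ∈ S)
    (hnp : ∀ t, t <+: w → t ∉ (↑X : Set (List A))) : w ∈ PF X := by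
  rcases prefix_dichotomy hrec hd1 hP hS hXne hw with ⟨x, hx, hxw⟩ | ⟨x, hx, h1, h2⟩
  · exact absurd (Finset.mem_coe.2 hx) (hnp x hxw)
  · exact (mem_PF hne).2 ⟨x, hx, h1, h2⟩

lemma nil_mem_PF (hXne : X.Nonempty) (hne : ∀ x ∈ X, x ≠ []) : [] ∈ PF X := by
  obtain ⟨x, hx⟩ := hXne
  exact (mem_PF hne).2 ⟨x, hx, List.nil_prefix, fun h => hne x hx h.symm⟩

lemma PF_disjoint_X (hP : IsPrefixCode (↑X : Set (List A)))
    (hne : ∀ x ∈ X, x ≠ []) : Disjoint (PF X) X := by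
  rw [Finset.disjoint_left]
  intro p hp hpX
  exact PF_noXprefix hP hne hp p (List.prefix_refl p) (Finset.mem_coe.2 hpX)

lemma card_PF_eq_pc (hrec : Recurrent S)
    (hd1 : ∀ w ∈ S, parseCount (↑X : Set (List A)) w ≤ d)
    (hP : IsPrefixCode (↑X : Set (List A))) (hS : IsSuffixCode (↑X : Set (List A)))
    (hXne : X.Nonempty) {w : List A} (hw : w ∈ S) :
    ((PF X).filter (fun p => p <:+ w)).card = parseCount (↑X : Set (List A)) w := by
  have hne : ∀ x ∈ X, x ≠ [] := fun x hx => hP.1 x (Finset.mem_coe.2 hx)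
  have hset : (PF X).filter (fun p => p <:+ w) = sufD (↑X : Set (List A)) w := by
    ext t
    rw [Finset.mem_filter, mem_sufD]
    constructor
    · rintro ⟨hPF, hsuf⟩
      exact ⟨hsuf, PF_noXprefix hP hne hPF⟩
    · rintro ⟨hsuf, hnp⟩
      exact ⟨mem_PF_of_noXprefix hrec hd1 hP hS hXne hne
        (hrec.1 w hw t hsuf.isInfix) hnp, hsuf⟩
  rw [hset, ← parseCount_eq_card_sufD hP hS]

lemma tree_id (hrec : Recurrent S)
    (hd1 : ∀ w ∈ S, parseCount (↑X : Set (List A)) w ≤ d)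
    (hP : IsPrefixCode (↑X : Set (List A))) (hS : IsSuffixCode (↑X : Set (List A)))
    (hXne : X.Nonempty) (hXS : (↑X : Set (List A)) ⊆ S) :
    ∑ p ∈ PF X, ((rC S p : ℤ) - 1) = (X.card : ℤ) - 1 := by
  have hne : ∀ x ∈ X, x ≠ [] := fun x hx => hP.1 x (Finset.mem_coe.2 hx)
  have hfac := hrec.1
  have hnat : ∑ p ∈ PF X, rC S p = ((PF X ∪ X).erase []).card := by
    unfold rC
    rw [← Finset.card_sigma]
    apply Finset.card_bij (fun (q : Σ _ : List A, A) _ => q.1 ++ [q.2])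
    · rintro ⟨p, a⟩ hq
      simp only [Finset.mem_sigma, Finset.mem_filter, Finset.mem_univ, true_and] at hq
      obtain ⟨hpPF, hpa⟩ := hq
      rw [Finset.mem_erase, Finset.mem_union]
      refine ⟨by simp, ?_⟩
      show p ++ [a] ∈ PF X ∨ p ++ [a] ∈ X
      rcases prefix_dichotomy hrec hd1 hP hS hXne hpa with ⟨x, hx, hxw⟩ | ⟨x, hx, h1, h2⟩
      · right
        rcases List.prefix_concat_iff.1 hxw with h | h
        · exact h ▸ hx
        · exact absurd (Finset.mem_coe.2 hx) (PF_noXprefix hP hne hpPF x h)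
      · left
        exact (mem_PF hne).2 ⟨x, hx, h1, h2⟩
    · rintro ⟨p, a⟩ _ ⟨p', a'⟩ _ h
      have h1 : p = p' := by
        have := congrArg List.dropLast h
        simpa [List.dropLast_concat] using this
      subst h1
      have h2 := List.append_cancel_left h
      simp only [List.cons.injEq, and_true] at h2
      simp [Sigma.ext_iff, h2]
    · intro w hw
      rw [Finset.mem_erase, Finset.mem_union] at hw
      obtain ⟨hwne, hmem⟩ := hw
      refine ⟨⟨w.dropLast, w.getLast hwne⟩, ?_, List.dropLast_append_getLast hwne⟩
      simp only [Finset.mem_sigma, Finset.mem_filter, Finset.mem_univ, true_and]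
      have hdl : w.dropLast.length = w.length - 1 := List.length_dropLast (xs := w)
      have hwpos : 1 ≤ w.length := List.length_pos_iff.2 hwne
      constructor
      · rcases hmem with h | h
        · obtain ⟨x, hx, hpre, hnex⟩ := (mem_PF hne).1 h
          refine (mem_PF hne).2 ⟨x, hx, (List.dropLast_prefix w).trans hpre, ?_⟩
          intro heq
          have h1 := hpre.length_le
          have h2 : w.length ≠ x.length := fun hh => hnex (hpre.eq_of_length hh)
          have h3 := congrArg List.length heq
          omega
        · refine (mem_PF hne).2 ⟨w, h, List.dropLast_prefix w, ?_⟩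
          intro heq
          have h3 := congrArg List.length heq
          omega
      · rw [List.dropLast_append_getLast hwne]
        rcases hmem with h | h
        · exact PF_subset_S hfac hXS hne w h
        · exact hXS (Finset.mem_coe.2 h)
  have hcard : ((PF X ∪ X).erase []).card + 1 = (PF X).card + X.card := by
    rw [Finset.card_erase_add_one (Finset.mem_union_left X (nil_mem_PF hXne hne)),
      Finset.card_union_of_disjoint (PF_disjoint_X hP hne)]
  rw [Finset.sum_sub_distrib, Finset.sum_const, nsmul_eq_mul, mul_one]
  have hZ : (∑ p ∈ PF X, (rC S p : ℤ)) = (((PF X ∪ X).erase []).card : ℤ) := by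
    exact_mod_cast congrArg (Nat.cast : ℕ → ℤ) hnat
  rw [hZ]
  have := hcard
  push_cast
  omega

lemma SnF_pairwiseDisjoint (Q : List A → Prop) :
    (↑(Finset.range L) : Set ℕ).PairwiseDisjoint
      (fun n => (SnF S n).filter Q) := by
  intro m _ n _ hmn
  rw [Function.onFun, Finset.disjoint_left]
  intro w hw1 hw2
  rw [Finset.mem_filter, mem_SnF] at hw1 hw2
  exact hmn (hw1.1.2.symm.trans hw2.1.2)


lemma sum_biUnion_filter {L : ℕ} (p : List A) (g : List A → ℤ) :
    ∑ w ∈ ((Finset.range L).biUnion fun n => SnF S n).filter (fun w => p <:+ w), g w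
      = ∑ n ∈ Finset.range L, ∑ w ∈ (SnF S n).filter (fun w => p <:+ w), g w := by
  rw [Finset.filter_biUnion]
  apply Finset.sum_biUnion (f := g)
  intro m _ n _ hmn
  rw [Function.onFun, Finset.disjoint_left]
  intro w hw1 hw2
  rw [Finset.mem_filter, mem_SnF] at hw1 hw2
  exact hmn (hw1.1.2.symm.trans hw2.1.2)

lemma sum_biUnion_all {L : ℕ} (g : List A → ℤ) :
    ∑ w ∈ ((Finset.range L).biUnion fun n => SnF S n), g w
      = ∑ n ∈ Finset.range L, ∑ w ∈ SnF S n, g w := by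
  have hdisj : (↑(Finset.range L) : Set ℕ).PairwiseDisjoint (fun n => SnF S n) := by
    intro m _ n _ hmn
    rw [Function.onFun, Finset.disjoint_left]
    intro w hw1 hw2
    rw [mem_SnF] at hw1 hw2
    exact hmn (hw1.2.symm.trans hw2.2)
  exact Finset.sum_biUnion (f := g) hdisj

set_option maxHeartbeats 1000000 in
lemma level_collapse {p : List A} (hplen : p.length ≤ L) :
    ∑ i ∈ Finset.range (L - p.length), ∑ u ∈ LnF S i p, mZ S (u ++ p)
      = ∑ w ∈ ((Finset.range L).biUnion fun n => SnF S n).filter (fun w => p <:+ w),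
          mZ S w := by
  have hcol : ∀ i ∈ Finset.range (L - p.length), ∑ u ∈ LnF S i p, mZ S (u ++ p)
      = ∑ w ∈ (SnF S (i + p.length)).filter (fun w => p <:+ w), mZ S w :=
    fun i _ => collapse1 i p (mZ S)
  rw [Finset.sum_congr rfl hcol]
  have hIco : ∑ i ∈ Finset.range (L - p.length),
        (∑ w ∈ (SnF S (i + p.length)).filter (fun w => p <:+ w), mZ S w)
      = ∑ n ∈ Finset.Ico p.length L,
        (∑ w ∈ (SnF S n).filter (fun w => p <:+ w), mZ S w) := by
    rw [Finset.sum_Ico_eq_sum_range]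
    exact Finset.sum_congr rfl (fun i _ => by rw [add_comm])
  rw [hIco]
  have hzero : ∑ n ∈ Finset.Ico 0 p.length,
      (∑ w ∈ (SnF S n).filter (fun w => p <:+ w), mZ S w) = 0 := by
    apply Finset.sum_eq_zero
    intro n hn
    rw [Finset.mem_Ico] at hn
    have hempty : (SnF S n).filter (fun w => p <:+ w) = ∅ := by
      rw [Finset.filter_eq_empty_iff]
      intro w hw hsuf
      rw [mem_SnF] at hw
      have := hsuf.length_le
      omega
    rw [hempty, Finset.sum_empty]
  have hext : ∑ n ∈ Finset.Ico p.length L,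
        (∑ w ∈ (SnF S n).filter (fun w => p <:+ w), mZ S w)
      = ∑ n ∈ Finset.range L,
        (∑ w ∈ (SnF S n).filter (fun w => p <:+ w), mZ S w) := by
    rw [Finset.range_eq_Ico,
      ← Finset.sum_Ico_consecutive _ (Nat.zero_le p.length) hplen, hzero, zero_add]
  rw [hext]
  exact (sum_biUnion_filter (S := S) (L := L) p (mZ S)).symm

lemma Eq4_lemma (hrec : Recurrent S) (halph : ∀ a : A, [a] ∈ S) {k L : ℕ}
    (hk : Fintype.card A = k + 1) :
    ∑ w ∈ SnF S L, ((rC S w : ℤ) - 1)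
      = (k : ℤ) + ∑ w ∈ ((Finset.range L).biUnion fun n => SnF S n), mZ S w := by
  have hfac := hrec.1
  have h0 : fI S L [] = ∑ w ∈ SnF S L, ((rC S w : ℤ) - 1) := by
    rw [fI]
    have hc := collapse1 (S := S) L ([] : List A) (fun w => (rC S w : ℤ) - 1)
    simp only [List.append_nil, List.length_nil, Nat.add_zero] at hc ⊢
    rw [hc]
    congr 1
    apply Finset.filter_true_of_mem
    intro w _
    exact List.nil_suffix
  have h1 : fI S 0 ([] : List A) = (k : ℤ) := by
    rw [fI_zero (nil_mem_S hrec)]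
    have hrc : rC S [] = k + 1 := by
      unfold rC
      have huniv : Finset.univ.filter (fun a : A => ([] : List A) ++ [a] ∈ S)
          = Finset.univ := by
        apply Finset.filter_true_of_mem
        intro a _
        simpa using halph a
      rw [huniv, Finset.card_univ, hk]
    rw [hrc]
    push_cast
    ring
  have h3 : ∀ i ∈ Finset.range L,
      ∑ u ∈ LnF S i ([] : List A), mZ S (u ++ ([] : List A)) = ∑ w ∈ SnF S i, mZ S w := by
    intro i _
    rw [collapse1 i ([] : List A) (mZ S)]
    simp only [List.length_nil, Nat.add_zero]
    congr 1
    apply Finset.filter_true_of_mem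
    intro w _
    exact List.nil_suffix
  have h2 := fI_telescope hfac L ([] : List A)
  rw [h0, h1, Finset.sum_congr rfl h3] at h2
  rw [h2, sum_biUnion_all]

set_option maxHeartbeats 1000000 in
lemma master (hrec : Recurrent S) (halph : ∀ a : A, [a] ∈ S) {k : ℕ}
    (hk : Fintype.card A = k + 1)
    (hmax : IsSMaximalBifixCode S (↑X : Set (List A)))
    (hd : SDegreeIs S (↑X : Set (List A)) d) :
    (X.card : ℤ) - 1 = d * k +
      ∑ w ∈ (Finset.range (X.sup List.length)).biUnion (fun n => SnF S n),
        mZ S w * ((d : ℤ) - parseCount (↑X : Set (List A)) w) := by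
  have hP := hmax.1.1
  have hS := hmax.1.2
  have hXS := hmax.2.1
  have hd1 := hd.1
  have hfac := hrec.1
  have hA : Nonempty A := Fintype.card_pos_iff.1 (by omega)
  obtain ⟨a₀⟩ := hA
  have hXne : X.Nonempty := X_nonempty hmax halph a₀
  set L := X.sup List.length with hLdef
  have hL : ∀ x ∈ X, x.length ≤ L := fun x hx => Finset.le_sup hx
  have hne : ∀ x ∈ X, x ≠ [] := fun x hx => hP.1 x (Finset.mem_coe.2 hx)
  have hPlen : ∀ p ∈ PF X, p.length ≤ L := by
    intro p hp
    obtain ⟨x, hx, hpre, _⟩ := (mem_PF hne).1 hp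
    exact hpre.length_le.trans (hL x hx)
  have hsmallS : ∀ w ∈ (Finset.range L).biUnion (fun n => SnF S n), w ∈ S := by
    intro w hw
    rw [Finset.mem_biUnion] at hw
    obtain ⟨n, _, hn⟩ := hw
    exact (mem_SnF.1 hn).1
  have hπd : ∀ w ∈ SnF S L, (((PF X).filter (fun p => p <:+ w)).card : ℤ) = (d : ℤ) := by
    intro w hw
    rw [mem_SnF] at hw
    rw [card_PF_eq_pc hrec hd1 hP hS hXne hw.1,
      pc_const hrec hd hP hS hXne hL w hw.1 (le_of_eq hw.2.symm)]
  have Eq1 : ∑ p ∈ PF X, fI S (L - p.length) p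
      = (d : ℤ) * ∑ w ∈ SnF S L, ((rC S w : ℤ) - 1) := by
    have h1 : ∀ p ∈ PF X, fI S (L - p.length) p
        = ∑ w ∈ (SnF S L).filter (fun w => p <:+ w), ((rC S w : ℤ) - 1) := by
      intro p hp
      rw [fI, collapse1 (L - p.length) p (fun w => (rC S w : ℤ) - 1),
        Nat.sub_add_cancel (hPlen p hp)]
    rw [Finset.sum_congr rfl h1, swap_sum, Finset.mul_sum]
    exact Finset.sum_congr rfl (fun w hw => by rw [hπd w hw])
  have Eq2 : ∑ p ∈ PF X, fI S 0 p = (X.card : ℤ) - 1 := by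
    have h1 : ∀ p ∈ PF X, fI S 0 p = (rC S p : ℤ) - 1 :=
      fun p hp => fI_zero (PF_subset_S hfac hXS hne p hp)
    rw [Finset.sum_congr rfl h1]
    exact tree_id hrec hd1 hP hS hXne hXS
  have Eq3 : ∑ p ∈ PF X, ∑ i ∈ Finset.range (L - p.length), ∑ u ∈ LnF S i p, mZ S (u ++ p)
      = ∑ w ∈ (Finset.range L).biUnion (fun n => SnF S n),
          (((PF X).filter (fun p => p <:+ w)).card : ℤ) * mZ S w := by
    rw [Finset.sum_congr rfl (fun p hp => level_collapse (hPlen p hp)), swap_sum]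
  have Eq4 := Eq4_lemma (S := S) (L := L) hrec halph hk
  have A1 : ∑ p ∈ PF X, fI S (L - p.length) p
      = ∑ p ∈ PF X, fI S 0 p +
        ∑ p ∈ PF X, ∑ i ∈ Finset.range (L - p.length), ∑ u ∈ LnF S i p, mZ S (u ++ p) := by
    rw [← Finset.sum_add_distrib]
    exact Finset.sum_congr rfl (fun p _ => fI_telescope hfac _ p)
  have hpceq : ∑ w ∈ (Finset.range L).biUnion (fun n => SnF S n),
        (((PF X).filter (fun p => p <:+ w)).card : ℤ) * mZ S w
      = ∑ w ∈ (Finset.range L).biUnion (fun n => SnF S n),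
        (parseCount (↑X : Set (List A)) w : ℤ) * mZ S w := by
    apply Finset.sum_congr rfl
    intro w hw
    rw [card_PF_eq_pc hrec hd1 hP hS hXne (hsmallS w hw)]
  have expand : ∑ w ∈ (Finset.range L).biUnion (fun n => SnF S n),
        mZ S w * ((d : ℤ) - parseCount (↑X : Set (List A)) w)
      = (d : ℤ) * (∑ w ∈ (Finset.range L).biUnion (fun n => SnF S n), mZ S w)
        - ∑ w ∈ (Finset.range L).biUnion (fun n => SnF S n),
            (parseCount (↑X : Set (List A)) w : ℤ) * mZ S w := by
    rw [Finset.mul_sum, ← Finset.sum_sub_distrib]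
    exact Finset.sum_congr rfl (fun w _ => by ring)
  rw [expand]
  have e1 := Eq1
  rw [A1, Eq2, Eq3, hpceq, Eq4] at e1
  linarith [e1]

end PFsec

end Aux
/-- **Cardinality Theorem.** Let `S` be a recurrent set containing the
alphabet `A` with `Card A = k + 1`, and let `X ⊆ S` be a finite `S`-maximal bifix code of
`S`-degree `d`. If `S` is strong then `Card X - 1 ≥ d k`; if `S` is weak then
`Card X - 1 ≤ d k`; if `S` is neutral then `Card X - 1 = d k`. -/
theorem cardinality_theorem {A : Type*} [Fintype A] (S : Set (List A))
    (hrec : Recurrent S) (halph : ∀ a : A, [a] ∈ S)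
    (k : ℕ) (hk : Fintype.card A = k + 1)
    (X : Finset (List A)) (hmax : IsSMaximalBifixCode S ↑X)
    (d : ℕ) (hd : SDegreeIs S (↑X : Set (List A)) d) :
    ((∀ w ∈ S, (0 : ℤ) ≤ ((Eext S w).ncard : ℤ) - (Lext S w).ncard - (Rext S w).ncard + 1) →
      (d * k : ℤ) ≤ (X.card : ℤ) - 1) ∧
    ((∀ w ∈ S, ((Eext S w).ncard : ℤ) - (Lext S w).ncard - (Rext S w).ncard + 1 ≤ 0) →
      (X.card : ℤ) - 1 ≤ (d * k : ℤ)) ∧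
    ((∀ w ∈ S, ((Eext S w).ncard : ℤ) - (Lext S w).ncard - (Rext S w).ncard + 1 = 0) →
      (X.card : ℤ) - 1 = (d * k : ℤ)) := by
  classical
  have hbridge : ∀ w : List A,
      ((Eext S w).ncard : ℤ) - (Lext S w).ncard - (Rext S w).ncard + 1 = mZ S w := by
    intro w
    rw [Eext_ncard, Lext_ncard, Rext_ncard, mZ]
  have hmaster := master (S := S) (X := X) (d := d) hrec halph hk hmax hd
  set F := (Finset.range (X.sup List.length)).biUnion (fun n => SnF S n) with hF
  have hFS : ∀ w ∈ F, w ∈ S := by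
    intro w hw
    rw [hF, Finset.mem_biUnion] at hw
    obtain ⟨n, _, hn⟩ := hw
    exact (mem_SnF.1 hn).1
  have hterm : ∀ w ∈ F, (0 : ℤ) ≤ (d : ℤ) - parseCount (↑X : Set (List A)) w := by
    intro w hw
    have h1 := hd.1 w (hFS w hw)
    have h2 : (parseCount (↑X : Set (List A)) w : ℤ) ≤ (d : ℤ) := by exact_mod_cast h1
    linarith
  refine ⟨?_, ?_, ?_⟩
  · intro hstrong
    have hsum : 0 ≤ ∑ w ∈ F, mZ S w * ((d : ℤ) - parseCount (↑X : Set (List A)) w) :=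
      Finset.sum_nonneg (fun w hw => mul_nonneg
        (by rw [← hbridge w]; exact hstrong w (hFS w hw)) (hterm w hw))
    linarith [hmaster]
  · intro hweak
    have hsum : ∑ w ∈ F, mZ S w * ((d : ℤ) - parseCount (↑X : Set (List A)) w) ≤ 0 := by
      apply Finset.sum_nonpos
      intro w hw
      have hm : mZ S w ≤ 0 := by rw [← hbridge w]; exact hweak w (hFS w hw)
      have h1 : 0 ≤ -mZ S w * ((d : ℤ) - parseCount (↑X : Set (List A)) w) :=
        mul_nonneg (by linarith) (hterm w hw)
      rw [neg_mul] at h1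
      linarith
    linarith [hmaster]
  · intro hneut
    have hsum : ∑ w ∈ F, mZ S w * ((d : ℤ) - parseCount (↑X : Set (List A)) w) = 0 := by
      apply Finset.sum_eq_zero
      intro w hw
      have hm : mZ S w = 0 := by rw [← hbridge w]; exact hneut w (hFS w hw)
      rw [hm, zero_mul]
    linarith [hmaster]

end Paper
end

section
/- For any n ≥ 1 and any recurrent set S, the set S ∩ A^n of words of S of length n is an S-maximal bifix code of S-degree n. -/
namespace Paper

variable {A : Type*}

lemma append_mem_starOf {X : Set (List A)} {a b : List A} (ha : a ∈ X) (hb : b ∈ starOf X) :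
    (a ++ b) ∈ starOf X := by
  obtain ⟨ls, h1, h2⟩ := hb
  refine ⟨a :: ls, ?_, by simp [h2]⟩
  intro u hu
  rcases List.mem_cons.mp hu with rfl | hu
  · exact ha
  · exact h1 u hu

lemma chunk_mem_star {S : Set (List A)} (hfac : Factorial S) {n : ℕ} (hn : 1 ≤ n)
    {w : List A} (hw : w ∈ S) :
    ∀ k (z : List A), z.length ≤ k → z <:+: w → n ∣ z.length →
      z ∈ starOf {w ∈ S | w.length = n} := by
  intro k
  induction k with
  | zero =>
    intro z hlen _ _
    have : z = [] := List.length_eq_zero_iff.mp (Nat.le_zero.mp hlen)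
    exact ⟨[], by simp, by simp [this]⟩
  | succ k ih =>
    intro z hlen hinf hdvd
    rcases eq_or_ne z [] with rfl | hz
    · exact ⟨[], by simp, by simp⟩
    · have hzpos : 0 < z.length := List.length_pos_iff.mpr hz
      have hnz : n ≤ z.length := Nat.le_of_dvd hzpos hdvd
      have htake : z.take n ∈ {w ∈ S | w.length = n} := by
        refine ⟨hfac w hw _ ((z.take_prefix n).isInfix.trans hinf), by simp [hnz]⟩
      have hdrop : z.drop n ∈ starOf {w ∈ S | w.length = n} := by
        refine ih (z.drop n) ?_ ((z.drop_suffix n).isInfix.trans hinf) ?_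
        · simp only [List.length_drop]; omega
        · simp only [List.length_drop]
          exact Nat.dvd_sub hdvd dvd_rfl
      have := append_mem_starOf htake hdrop
      rwa [List.take_append_drop] at this

lemma star_dvd_length {X : Set (List A)} {n : ℕ} (hX : ∀ x ∈ X, x.length = n)
    {x : List A} (hx : x ∈ starOf X) : n ∣ x.length := by
  obtain ⟨ls, h1, rfl⟩ := hx
  rw [List.length_flatten]
  refine List.dvd_sum ?_
  intro m hm
  simp only [List.mem_map] at hm
  obtain ⟨u, hu, rfl⟩ := hm
  exact (hX u (h1 u hu)) ▸ dvd_refl _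

lemma parseCount_eq {S : Set (List A)} (hfac : Factorial S) {n : ℕ} (hn : 1 ≤ n)
    {w : List A} (hw : w ∈ S) :
    parseCount {w ∈ S | w.length = n} w = min n (w.length + 1) := by
  set L := w.length with hL
  set X := {w ∈ S | w.length = n} with hXdef
  set f : ℕ → List A × List A × List A :=
    fun i => (w.take i, (w.drop i).take (n * ((L - i) / n)), w.drop (i + n * ((L - i) / n)))
    with hf
  have hset : {p | IsParse X w p} = f '' Set.Iio (min n (L + 1)) := by
    ext p
    simp only [Set.mem_setOf_eq, Set.mem_image, Set.mem_Iio]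
    constructor
    · rintro ⟨hsplit, hsuf, hstar, hpre⟩
      obtain ⟨v, x, u⟩ := p
      simp only at hsplit hsuf hstar hpre ⊢
      rw [List.append_assoc] at hsplit
      have hLen : L = v.length + (x.length + u.length) := by
        rw [hL, hsplit]; simp
      have hvn : v.length < n := by
        by_contra hcon
        push_neg at hcon
        refine hsuf (v.drop (v.length - n)) (v.drop_suffix _) ⟨?_, ?_⟩
        · refine hfac w hw _ (((v.drop_suffix _).isInfix).trans ?_)
          rw [hsplit]; exact (v.prefix_append _).isInfix
        · simp; omega
      have hun : u.length < n := by
        by_contra hcon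
        push_neg at hcon
        refine hpre (u.take n) (u.take_prefix _) ⟨?_, ?_⟩
        · refine hfac w hw _ ((u.take_prefix n).isInfix.trans ?_)
          rw [hsplit]
          exact ((List.suffix_append x u).trans (List.suffix_append v (x ++ u))).isInfix
        · simp; omega
      have hdvd : n ∣ x.length := star_dvd_length (fun y hy => hy.2) hstar
      obtain ⟨q, hq⟩ := hdvd
      refine ⟨v.length, by omega, ?_⟩
      have hqeq : q = (L - v.length) / n := by
        have h1 : n * q ≤ L - v.length := by omega
        have h2 : L - v.length < n * (q + 1) := by
          rw [Nat.mul_add, Nat.mul_one]; omega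
        have h3 : q ≤ (L - v.length) / n := (Nat.le_div_iff_mul_le (by omega)).mpr
          (by rw [Nat.mul_comm]; exact h1)
        have h4 : (L - v.length) / n < q + 1 := Nat.div_lt_of_lt_mul h2
        omega
      have hx : n * ((L - v.length) / n) = x.length := by rw [← hqeq, ← hq]
      rw [hf]
      simp only
      rw [hx]
      have htk : w.take v.length = v := by rw [hsplit, List.take_left]
      have hdr : w.drop v.length = x ++ u := by rw [hsplit, List.drop_left]
      rw [htk, hdr, List.take_left]
      have : w.drop (v.length + x.length) = u := by
        rw [← List.drop_drop, hdr, List.drop_left]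
      rw [this]
    · rintro ⟨i, hi, rfl⟩
      set m := n * ((L - i) / n) with hm
      have hmle : m ≤ L - i := by
        rw [hm, Nat.mul_comm]; exact Nat.div_mul_le_self _ _
      have hiL : i ≤ L := by omega
      have hmod : (L - i) % n + n * ((L - i) / n) = L - i := Nat.mod_add_div _ _
      have hmodlt : (L - i) % n < n := Nat.mod_lt _ (by omega)
      refine ⟨?_, ?_, ?_, ?_⟩
      · simp only [hf]
        rw [List.append_assoc, ← List.drop_drop,  List.take_append_drop,
          List.take_append_drop]
      · intro s hs ⟨_, hslen⟩
        have := hs.length_le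
        simp only [hf, List.length_take] at this
        omega
      · refine chunk_mem_star hfac hn hw (m + 1) _ ?_ ?_ ?_
        · simp only [hf, List.length_take]; omega
        · exact (((w.drop i).take_prefix m).isInfix).trans (w.drop_suffix i).isInfix
        · simp only [hf, List.length_take, List.length_drop]
          rw [min_eq_left (by omega)]
          exact dvd_mul_right n _
      · intro t ht ⟨_, htlen⟩
        have := ht.length_le
        simp only [hf, List.length_drop] at this
        omega
  rw [parseCount, hset, Set.ncard_image_of_injOn, ← Finset.coe_range,
    Set.ncard_coe_finset, Finset.card_range]
  intro i hi j hj hEq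
  simp only [Set.mem_Iio] at hi hj
  have := congrArg (fun p => p.1.length) hEq
  simp only [hf, List.length_take] at this
  omega


lemma extend_length {S : Set (List A)} (hrec : Recurrent S) {y : List A} (hy : y ∈ S)
    (hy0 : y ≠ []) : ∀ k, ∃ w ∈ S, y <+: w ∧ k ≤ w.length := by
  intro k
  induction k with
  | zero => exact ⟨y, hy, List.prefix_refl y, Nat.zero_le _⟩
  | succ k ih =>
    obtain ⟨w, hw, hpre, hlen⟩ := ih
    obtain ⟨v, hv⟩ := hrec.2.2.2 w hw w hw
    refine ⟨w ++ v ++ w, hv, hpre.trans ((w.prefix_append v).trans ((w ++ v).prefix_append w)), ?_⟩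
    have hw0 : 0 < w.length := by
      have := hpre.length_le
      have : 0 < y.length := List.length_pos_iff.mpr hy0
      omega
    simp only [List.length_append]
    omega

lemma exists_len {S : Set (List A)} (hrec : Recurrent S) : ∀ k, ∃ w ∈ S, w.length = k := by
  intro k
  have hne : ∃ y ∈ S, y ≠ [] := by
    by_contra h
    push_neg at h
    apply hrec.2.1
    apply Set.eq_singleton_iff_nonempty_unique_mem.mpr ⟨hrec.2.2.1, h⟩
  obtain ⟨y, hy, hy0⟩ := hne
  obtain ⟨w, hw, _, hlen⟩ := extend_length hrec hy hy0 k
  exact ⟨w.take k, hrec.1 w hw _ (w.take_prefix k).isInfix, by simp; omega⟩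


/-- For any `n ≥ 1` and any recurrent set `S`, the set `S ∩ Aⁿ` is an
`S`-maximal bifix code of `S`-degree `n`. -/
theorem uniform_code_is_S_maximal_bifix {A : Type*} [Fintype A] (S : Set (List A))
    (hrec : Recurrent S) (n : ℕ) (hn : 1 ≤ n) :
    IsSMaximalBifixCode S {w ∈ S | w.length = n} ∧
      SDegreeIs S {w ∈ S | w.length = n} n := by
  have hfac := hrec.1
  have hbifix : IsBifixCode {w ∈ S | w.length = n} := by
    constructor
    · refine ⟨fun x hx => ?_, fun x hx y hy h => h.eq_of_length (hx.2.trans hy.2.symm)⟩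
      intro h; rw [h] at hx; simp at hx; omega
    · refine ⟨fun x hx => ?_, fun x hx y hy h => h.eq_of_length (hx.2.trans hy.2.symm)⟩
      intro h; rw [h] at hx; simp at hx; omega
  refine ⟨⟨hbifix, fun x hx => hx.1, ?_⟩, ?_, ?_⟩
  · intro Y hY hYS hXY
    apply Set.Subset.antisymm _ hXY
    intro y hy
    have hyS : y ∈ S := hYS hy
    rcases le_or_gt n y.length with hge | hlt
    · have hx : y.take n ∈ {w ∈ S | w.length = n} :=
        ⟨hfac y hyS _ (y.take_prefix n).isInfix, by simp [hge]⟩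
      have := hY.1.2 _ (hXY hx) y hy (y.take_prefix n)
      rw [← this]; exact hx
    · exfalso
      have hy0 : y ≠ [] := hY.1.1 y hy
      obtain ⟨w, hw, hpre, hlen⟩ := extend_length hrec hyS hy0 n
      have hx : w.take n ∈ {w ∈ S | w.length = n} :=
        ⟨hfac w hw _ (w.take_prefix n).isInfix, by simp [hlen]⟩
      have hyx : y <+: w.take n := by
        have h1 : y = w.take y.length := List.prefix_iff_eq_take.mp hpre
        have h2 : (w.take n).take y.length = w.take y.length := by
          rw [List.take_take]; congr 1; omega
        rw [h1, ← h2]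
        exact List.take_prefix _ _
      have := hY.1.2 y hy _ (hXY hx) hyx
      have h2 := congrArg List.length this
      simp at h2
      omega
  · intro w hw
    rw [parseCount_eq hfac hn hw]
    exact min_le_left _ _
  · obtain ⟨w, hw, hwl⟩ := exists_len hrec n
    refine ⟨w, hw, ?_⟩
    rw [parseCount_eq hfac hn hw, hwl]
    omega


end Paper
end

section
/- Let X be a prefix code over A. For any word u and letter a, the number of parses satisfies δ_X(ua) = δ_X(u) if ua ∈ A*X, and δ_X(ua) = δ_X(u) + 1 otherwise. -/
namespace Paper

variable {A : Type*}

section ParseAux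
variable {A : Type*}

open Classical in
noncomputable def parsePhi (X : Set (List A)) (a : A) (p : List A × List A × List A) :
    List A × List A × List A :=
  if p.2.2 ++ [a] ∈ X then (p.1, p.2.1 ++ (p.2.2 ++ [a]), ([] : List A))
  else (p.1, p.2.1, p.2.2 ++ [a])

lemma snoc_eq_append {u y z : List A} {a : A} (h : u ++ [a] = y ++ z) (hz : z ≠ []) :
    ∃ z', z = z' ++ [a] ∧ u = y ++ z' := by
  rcases List.eq_nil_or_concat z with rfl | ⟨z', b, rfl⟩
  · exact absurd rfl hz
  · rw [List.concat_eq_append, ← List.append_assoc] at h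
    obtain ⟨h1, h2⟩ := List.append_inj' h rfl
    obtain rfl : a = b := by simpa using h2
    exact ⟨z', by simp, h1⟩

lemma prefix_snoc {t w : List A} {a : A} (h : t <+: w ++ [a]) : t <+: w ∨ t = w ++ [a] := by
  by_cases hl : t.length ≤ w.length
  · exact Or.inl (List.prefix_of_prefix_length_le h (List.prefix_append w [a]) hl)
  · refine Or.inr (h.eq_of_length ?_)
    have h2 := h.length_le
    simp only [List.length_append, List.length_singleton] at h2 ⊢
    omega

lemma flatten_injOn (X : Set (List A)) (hX : IsPrefixCode X) :
    ∀ ls1 ls2 : List (List A), (∀ u ∈ ls1, u ∈ X) → (∀ u ∈ ls2, u ∈ X) →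
      ls1.flatten = ls2.flatten → ls1 = ls2 := by
  intro ls1
  induction ls1 with
  | nil =>
    intro ls2 _ h2 h
    cases ls2 with
    | nil => rfl
    | cons y t =>
      exfalso
      have : y = [] := (List.flatten_eq_nil_iff.mp h.symm) y (by simp)
      exact hX.1 y (h2 y (by simp)) this
  | cons x ls1 ih =>
    intro ls2 h1 h2 h
    cases ls2 with
    | nil =>
      exfalso
      have : x = [] := (List.flatten_eq_nil_iff.mp h) x (by simp)
      exact hX.1 x (h1 x (by simp)) this
    | cons y t =>
      simp only [List.flatten_cons] at h
      have hxX : x ∈ X := h1 x (by simp)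
      have hyX : y ∈ X := h2 y (by simp)
      have hxy : x = y := by
        have hx : x <+: y ++ t.flatten := ⟨ls1.flatten, by rw [← h]⟩
        have hy : y <+: y ++ t.flatten := List.prefix_append y t.flatten
        rcases le_total x.length y.length with hle | hle
        · exact hX.2 x hxX y hyX (List.prefix_of_prefix_length_le hx hy hle)
        · exact (hX.2 y hyX x hxX (List.prefix_of_prefix_length_le hy hx hle)).symm
      subst hxy
      have htail : ls1.flatten = t.flatten := by
        exact List.append_cancel_left h
      rw [ih t (fun u hu => h1 u (by simp [hu])) (fun u hu => h2 u (by simp [hu])) htail]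

lemma parses_finite (X : Set (List A)) (w : List A) : {p | IsParse X w p}.Finite := by
  apply Set.Finite.subset
    (((Set.finite_Iic w.length).prod (Set.finite_Iic w.length)).image
      (fun ij : ℕ × ℕ => (w.take ij.1, (w.drop ij.1).take ij.2, (w.drop ij.1).drop ij.2)))
  rintro ⟨v, x, s⟩ ⟨hw, -, -, -⟩
  have hlen : v.length + x.length + s.length = w.length := by
    rw [hw]; simp; omega
  refine ⟨(v.length, x.length), ⟨by simp; omega, by simp; omega⟩, ?_⟩
  dsimp only
  rw [hw, List.append_assoc, List.take_left, List.drop_left, List.take_left, List.drop_left]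

lemma isParse_phi {X : Set (List A)} (hX : IsPrefixCode X) {u : List A} {a : A}
    {p : List A × List A × List A} (hp : IsParse X u p) :
    IsParse X (u ++ [a]) (parsePhi X a p) := by
  obtain ⟨v, x, w⟩ := p
  obtain ⟨hw, hv, ⟨ls, hls, rfl⟩, hsuf⟩ := hp
  unfold parsePhi
  dsimp only at *
  split_ifs with hmem
  · refine ⟨by rw [hw]; simp, hv, ⟨ls ++ [w ++ [a]], ?_, by simp⟩, ?_⟩
    · intro t ht
      rcases List.mem_append.mp ht with h | h
      · exact hls t h
      · simp at h; rw [h]; exact hmem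
    · intro t ht htX
      rw [List.prefix_nil.mp ht] at htX
      exact hX.1 [] htX rfl
  · refine ⟨by rw [hw]; simp, hv, ⟨ls, hls, rfl⟩, ?_⟩
    intro t ht htX
    rcases prefix_snoc ht with h | rfl
    · exact hsuf t h htX
    · exact hmem htX

lemma phi_injOn {X : Set (List A)} (hX : IsPrefixCode X) (u : List A) (a : A) :
    Set.InjOn (parsePhi X a) {p | IsParse X u p} := by
  rintro ⟨v1, x1, w1⟩ hp1 ⟨v2, x2, w2⟩ hp2 heq
  obtain ⟨-, -, ⟨ls1, hls1, rfl⟩, -⟩ := hp1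
  obtain ⟨-, -, ⟨ls2, hls2, rfl⟩, -⟩ := hp2
  unfold parsePhi at heq
  dsimp only at heq
  split_ifs at heq with h1 h2 h2
  · simp only [Prod.mk.injEq] at heq
    obtain ⟨rfl, e2, -⟩ := heq
    have hls : ls1 ++ [w1 ++ [a]] = ls2 ++ [w2 ++ [a]] := by
      apply flatten_injOn X hX
      · intro t ht
        rcases List.mem_append.mp ht with h | h
        · exact hls1 t h
        · simp at h; rw [h]; exact h1
      · intro t ht
        rcases List.mem_append.mp ht with h | h
        · exact hls2 t h
        · simp at h; rw [h]; exact h2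
      · simpa using e2
    obtain ⟨h3, h4⟩ := List.append_inj' hls rfl
    have hw : w1 = w2 := by
      have : w1 ++ [a] = w2 ++ [a] := by simpa using h4
      exact (List.append_inj' this rfl).1
    rw [h3, hw]
  · exfalso; simp only [Prod.mk.injEq] at heq
    exact (List.cons_ne_nil a (w2 ++ [a]).tail) (by simpa using heq.2.2.symm)
  · exfalso; simp only [Prod.mk.injEq] at heq
    exact (List.cons_ne_nil a (w1 ++ [a]).tail) (by simpa using heq.2.2)
  · simp only [Prod.mk.injEq] at heq
    obtain ⟨rfl, e2, e3⟩ := heq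
    have hw : w1 = w2 := (List.append_inj' e3 rfl).1
    rw [e2, hw]

lemma phi_surj {X : Set (List A)} (hX : IsPrefixCode X) {u : List A} {a : A}
    {q : List A × List A × List A} (hq : IsParse X (u ++ [a]) q)
    (hne : q.2.1 ≠ [] ∨ q.2.2 ≠ []) :
    ∃ p ∈ {p | IsParse X u p}, parsePhi X a p = q := by
  obtain ⟨v, x, w⟩ := q
  obtain ⟨hw, hv, ⟨ls, hls, rfl⟩, hsuf⟩ := hq
  by_cases hwe : w = []
  · subst hwe
    have hxne : ls.flatten ≠ [] := by
      rcases hne with h | h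
      · exact h
      · exact absurd rfl h
    rcases List.eq_nil_or_concat ls with rfl | ⟨ls', y, rfl⟩
    · simp at hxne
    rw [List.concat_eq_append] at *
    have hy : y ∈ X := hls y (by simp)
    have hyne : y ≠ [] := hX.1 y hy
    have hw' : u ++ [a] = (v ++ ls'.flatten) ++ y := by
      rw [hw]; simp
    obtain ⟨y', rfl, hu⟩ := snoc_eq_append hw' hyne
    refine ⟨(v, ls'.flatten, y'), ⟨by rw [hu], hv, ⟨ls', fun t ht => hls t (by simp [ht]), rfl⟩,
      ?_⟩, ?_⟩
    · intro t ht htX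
      dsimp only at ht
      have hty : t <+: y' ++ [a] := ht.trans (List.prefix_append y' [a])
      have := hX.2 t htX (y' ++ [a]) hy hty
      have h1 := ht.length_le
      have h2 : (y' ++ [a]).length = y'.length + 1 := by simp
      rw [this] at h1
      omega
    · unfold parsePhi
      rw [if_pos hy]
      simp
  · have hw' : u ++ [a] = (v ++ ls.flatten) ++ w := by rw [hw]
    obtain ⟨w', rfl, hu⟩ := snoc_eq_append hw' hwe
    refine ⟨(v, ls.flatten, w'), ⟨by rw [hu], hv, ⟨ls, hls, rfl⟩, ?_⟩, ?_⟩
    · intro t ht htX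
      exact hsuf t (ht.trans (List.prefix_append w' [a])) htX
    · unfold parsePhi
      rw [if_neg (hsuf (w' ++ [a]) List.prefix_rfl)]

end ParseAux

/- **Statement 12.** For a prefix code `X`, any word `u` and letter `a`, the number of
parses satisfies `δ_X (u a) = δ_X u` if `u a ∈ A* X`, and `δ_X (u a) = δ_X u + 1`
otherwise. -/
open Classical in
theorem parse_count_extension {A : Type*} (X : Set (List A)) (hX : IsPrefixCode X)
    (u : List A) (a : A) :
    parseCount X (u ++ [a]) =
      if ∃ v x, x ∈ X ∧ u ++ [a] = v ++ x then parseCount X u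
      else parseCount X u + 1 := by
  classical
  have hPfin := parses_finite X u
  have hcard : (parsePhi X a '' {p | IsParse X u p}).ncard = {p | IsParse X u p}.ncard :=
    Set.ncard_image_of_injOn (phi_injOn hX u a)
  have himg : parsePhi X a '' {p | IsParse X u p} ⊆ {p | IsParse X (u ++ [a]) p} := by
    rintro q ⟨p, hp, rfl⟩; exact isParse_phi hX hp
  by_cases hcond : ∃ v x, x ∈ X ∧ u ++ [a] = v ++ x
  · rw [if_pos hcond]
    have hQ : {p | IsParse X (u ++ [a]) p} = parsePhi X a '' {p | IsParse X u p} := by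
      apply Set.Subset.antisymm _ himg
      intro q hq
      by_cases hne : q.2.1 ≠ [] ∨ q.2.2 ≠ []
      · obtain ⟨p, hp, he⟩ := phi_surj hX hq hne
        exact ⟨p, hp, he⟩
      · exfalso
        push_neg at hne
        obtain ⟨v, x, w⟩ := q
        obtain ⟨h1, h2⟩ := hne
        dsimp only at h1 h2
        subst h1; subst h2
        obtain ⟨hw, hv, -, -⟩ := hq
        simp only [List.append_nil] at hw
        obtain ⟨v0, x0, hx0, heq⟩ := hcond
        exact hv x0 ⟨v0, by rw [← hw, heq]⟩ hx0
    show {p | IsParse X (u ++ [a]) p}.ncard = {p | IsParse X u p}.ncard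
    rw [hQ, hcard]
  · rw [if_neg hcond]
    have hQ : {p | IsParse X (u ++ [a]) p}
        = insert (u ++ [a], (([] : List A), ([] : List A)))
            (parsePhi X a '' {p | IsParse X u p}) := by
      apply Set.Subset.antisymm
      · intro q hq
        by_cases hne : q.2.1 ≠ [] ∨ q.2.2 ≠ []
        · obtain ⟨p, hp, he⟩ := phi_surj hX hq hne
          exact Set.mem_insert_of_mem _ ⟨p, hp, he⟩
        · push_neg at hne
          obtain ⟨v, x, w⟩ := q
          obtain ⟨h1, h2⟩ := hne
          dsimp only at h1 h2
          subst h1; subst h2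
          obtain ⟨hw, -, -, -⟩ := hq
          simp only [List.append_nil] at hw
          rw [← hw]
          exact Set.mem_insert _ _
      · intro q hq
        rcases hq with rfl | hq
        · refine ⟨by simp, ?_, ⟨[], by simp, rfl⟩, ?_⟩
          · intro s hs hsX
            obtain ⟨t, ht⟩ := hs
            exact hcond ⟨t, s, hsX, ht.symm⟩
          · intro t ht htX
            rw [List.prefix_nil.mp ht] at htX
            exact hX.1 [] htX rfl
        · exact himg hq
    have hT : (u ++ [a], (([] : List A), ([] : List A)))
        ∉ parsePhi X a '' {p | IsParse X u p} := by
      rintro ⟨⟨v, x, w⟩, -, heq⟩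
      unfold parsePhi at heq
      dsimp only at heq
      split_ifs at heq
      · simp only [Prod.mk.injEq] at heq
        have := heq.2.1
        simp at this
      · simp only [Prod.mk.injEq] at heq
        have := heq.2.2
        simp at this
    show {p | IsParse X (u ++ [a]) p}.ncard = {p | IsParse X u p}.ncard + 1
    rw [hQ, Set.ncard_insert_of_notMem hT (hPfin.image _), hcard]


end Paper
end

section
/- Let S be a biextendable set of words and w ∈ S. If the set AwA ∩ S = {awb | a,b ∈ A, awb ∈ S}, viewed in the free group F_A, is a basis of the subgroup it generates (i.e., is a free and independent set), then the extension graph G(w) is acyclic. -/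
namespace Paper

variable {A : Type*}

/- ### Auxiliary lemmas for Statement 14 -/

lemma toFG_cons (a : A) (l : List A) : toFG (a :: l) = FreeGroup.of a * toFG l := by
  simp [toFG]

lemma toFG_append (l1 l2 : List A) : toFG (l1 ++ l2) = toFG l1 * toFG l2 := by
  simp [toFG]

lemma toFG_eq_mk (l : List A) : toFG l = FreeGroup.mk (l.map (fun a => (a, true))) := by
  induction l with
  | nil => simp [toFG, FreeGroup.one_eq_mk]
  | cons a l ih =>
      rw [toFG_cons, ih]
      have : FreeGroup.of a = FreeGroup.mk [(a, true)] := rfl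
      rw [this, FreeGroup.mul_mk]
      rfl

lemma reduce_map [DecidableEq A] (l : List A) :
    FreeGroup.reduce (l.map (fun a => (a, true))) = l.map (fun a => (a, true)) := by
  induction l with
  | nil => simp
  | cons a l ih =>
      rw [List.map_cons, FreeGroup.reduce.cons, ih]
      cases l with
      | nil => simp
      | cons b l => simp

lemma toFG_injective : Function.Injective (toFG : List A → FreeGroup A) := by
  classical
  intro u v h
  rw [toFG_eq_mk, toFG_eq_mk] at h
  have h2 := congrArg FreeGroup.toWord h
  rw [FreeGroup.toWord_mk, FreeGroup.toWord_mk, reduce_map, reduce_map] at h2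
  have : Function.Injective (fun a : A => (a, true)) := fun a b hab => congrArg Prod.fst hab
  exact List.map_injective_iff.mpr this h2

lemma toFG_word_eq (a b : A) (w : List A) :
    toFG (a :: (w ++ [b])) = FreeGroup.of a * toFG w * FreeGroup.of b := by
  rw [toFG_cons, toFG_append, mul_assoc]
  simp [toFG]

/-- The set of generators `A w A ∩ S` inside the free group. -/
def Tset (S : Set (List A)) (w : List A) : Set (FreeGroup A) :=
  toFG '' {u ∈ S | ∃ a b : A, u = a :: (w ++ [b])}

/-- The letter carried by a sum element. -/
def letterOf (x : A ⊕ A) : A := Sum.elim id id x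

/-- The pair `(a, b)` associated to an (ordered) edge of the extension graph. -/
def pco {S : Set (List A)} {w : List A} (u v : ExtVertex S w) : A × A :=
  if u.1.isLeft then (letterOf u.1, letterOf v.1) else (letterOf v.1, letterOf u.1)

lemma pco_spec {S : Set (List A)} {w : List A} {u v : ExtVertex S w}
    (h : (extGraph S w).Adj u v) :
    (pco u v) ∈ Eext S w ∧
      ((u.1 = Sum.inl (pco u v).1 ∧ v.1 = Sum.inr (pco u v).2 ∧ u.1.isLeft = true) ∨
       (u.1 = Sum.inr (pco u v).2 ∧ v.1 = Sum.inl (pco u v).1 ∧ u.1.isLeft = false)) := by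
  rcases h with ⟨a, b, h1, h2, h3⟩ | ⟨a, b, h1, h2, h3⟩
  · have hL : u.1.isLeft = true := by rw [h1]; rfl
    have hpc : pco u v = (a, b) := by
      rw [pco, if_pos hL, h1, h2]; rfl
    rw [hpc]
    exact ⟨h3, Or.inl ⟨h1, h2, hL⟩⟩
  · have hL : u.1.isLeft = false := by rw [h1]; rfl
    have hpc : pco u v = (a, b) := by
      rw [pco, hL]; simp only [Bool.false_eq_true, if_false]; rw [h1, h2]; rfl
    rw [hpc]
    exact ⟨h3, Or.inr ⟨h1, h2, hL⟩⟩

lemma pco_mem_Tset {S : Set (List A)} {w : List A} {u v : ExtVertex S w}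
    (h : (extGraph S w).Adj u v) :
    toFG ((pco u v).1 :: (w ++ [(pco u v).2])) ∈ Tset S w := by
  obtain ⟨hmem, -⟩ := pco_spec h
  exact ⟨(pco u v).1 :: (w ++ [(pco u v).2]), ⟨hmem, (pco u v).1, (pco u v).2, rfl⟩, rfl⟩

/-- The generator in the free group on `Tset` associated to an ordered edge. -/
noncomputable def psi {S : Set (List A)} {w : List A} {u v : ExtVertex S w}
    (h : (extGraph S w).Adj u v) : FreeGroup (Tset S w) :=
  if u.1.isLeft then FreeGroup.of ⟨_, pco_mem_Tset h⟩
  else (FreeGroup.of ⟨_, pco_mem_Tset h⟩)⁻¹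

/-- The potential function used for telescoping. -/
noncomputable def phiV {S : Set (List A)} {w : List A} (u : ExtVertex S w) : FreeGroup A :=
  if u.1.isLeft then FreeGroup.of (letterOf u.1) * toFG w else (FreeGroup.of (letterOf u.1))⁻¹

lemma lift_psi {S : Set (List A)} {w : List A} {u v : ExtVertex S w}
    (h : (extGraph S w).Adj u v) :
    FreeGroup.lift (Subtype.val : (Tset S w) → FreeGroup A) (psi h) = phiV u * (phiV v)⁻¹ := by
  obtain ⟨-, ⟨h1, h2, hL⟩ | ⟨h1, h2, hL⟩⟩ := pco_spec h
  · have hvL : v.1.isLeft = false := by rw [h2]; rfl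
    have hlu : letterOf u.1 = (pco u v).1 := by rw [h1]; rfl
    have hlv : letterOf v.1 = (pco u v).2 := by rw [h2]; rfl
    rw [psi, if_pos hL, FreeGroup.lift_apply_of, phiV, phiV, if_pos hL, hvL]
    simp only [Bool.false_eq_true, if_false, hlu, hlv, inv_inv, toFG_word_eq]
  · have hvL : v.1.isLeft = true := by rw [h2]; rfl
    have hlu : letterOf u.1 = (pco u v).2 := by rw [h1]; rfl
    have hlv : letterOf v.1 = (pco u v).1 := by rw [h2]; rfl
    rw [psi, hL]
    simp only [Bool.false_eq_true, if_false, map_inv, FreeGroup.lift_apply_of]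
    rw [phiV, phiV, hL, if_pos hvL]
    simp only [Bool.false_eq_true, if_false, hlu, hlv, toFG_word_eq]
    group

/-- Product of generators along a walk. -/
noncomputable def walkProd {S : Set (List A)} {w : List A} :
    ∀ {x y : ExtVertex S w}, (extGraph S w).Walk x y → FreeGroup (Tset S w)
  | _, _, SimpleGraph.Walk.nil => 1
  | _, _, SimpleGraph.Walk.cons h q => psi h * walkProd q

lemma lift_walkProd {S : Set (List A)} {w : List A} {x y : ExtVertex S w}
    (p : (extGraph S w).Walk x y) :
    FreeGroup.lift (Subtype.val : (Tset S w) → FreeGroup A) (walkProd p)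
      = phiV x * (phiV y)⁻¹ := by
  induction p with
  | nil => simp [walkProd]
  | cons h q ih =>
      rw [walkProd, map_mul, lift_psi h, ih]
      group

lemma pco_eq_imp_edge_eq {S : Set (List A)} {w : List A}
    {u v u0 v0 : ExtVertex S w} (h : (extGraph S w).Adj u v)
    (h0 : (extGraph S w).Adj u0 v0) (hp : pco u v = pco u0 v0) :
    s(u, v) = s(u0, v0) := by
  obtain ⟨-, ⟨h1, h2, -⟩ | ⟨h1, h2, -⟩⟩ := pco_spec h <;>
    obtain ⟨-, ⟨g1, g2, -⟩ | ⟨g1, g2, -⟩⟩ := pco_spec h0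
  · have e1 : u = u0 := Subtype.ext (by rw [h1, g1, hp])
    have e2 : v = v0 := Subtype.ext (by rw [h2, g2, hp])
    rw [e1, e2]
  · have e1 : u = v0 := Subtype.ext (by rw [h1, g2, hp])
    have e2 : v = u0 := Subtype.ext (by rw [h2, g1, hp])
    rw [e1, e2, Sym2.eq_swap]
  · have e1 : u = v0 := Subtype.ext (by rw [h1, g2, hp])
    have e2 : v = u0 := Subtype.ext (by rw [h2, g1, hp])
    rw [e1, e2, Sym2.eq_swap]
  · have e1 : u = u0 := Subtype.ext (by rw [h1, g1, hp])
    have e2 : v = v0 := Subtype.ext (by rw [h2, g2, hp])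
    rw [e1, e2]

open Classical in
/-- Counting homomorphism for occurrences of the generator `t0`. -/
noncomputable def chiH {S : Set (List A)} {w : List A} (t0 : FreeGroup A) :
    FreeGroup (Tset S w) →* Multiplicative ℤ :=
  FreeGroup.lift (fun t : Tset S w =>
    if (t : FreeGroup A) = t0 then Multiplicative.ofAdd (1 : ℤ) else 1)

open Classical in
lemma chiH_of {S : Set (List A)} {w : List A} (t0 : FreeGroup A) (t : Tset S w) :
    chiH t0 (FreeGroup.of t)
      = if (t : FreeGroup A) = t0 then Multiplicative.ofAdd (1 : ℤ) else 1 := by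
  rw [chiH, FreeGroup.lift_apply_of]

lemma chi_psi_ne {S : Set (List A)} {w : List A} {u v : ExtVertex S w}
    (h : (extGraph S w).Adj u v) (t0 : FreeGroup A)
    (hne : toFG ((pco u v).1 :: (w ++ [(pco u v).2])) ≠ t0) :
    chiH t0 (psi h) = 1 := by
  rw [psi]
  split_ifs with hL
  · rw [chiH_of]
    exact if_neg hne
  · rw [map_inv, chiH_of, if_neg hne, inv_one]

lemma chi_psi_eq {S : Set (List A)} {w : List A} {u v : ExtVertex S w}
    (h : (extGraph S w).Adj u v) (t0 : FreeGroup A)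
    (heq : toFG ((pco u v).1 :: (w ++ [(pco u v).2])) = t0) :
    chiH t0 (psi h) ≠ 1 := by
  rw [psi]
  split_ifs with hL
  · rw [chiH_of, if_pos heq]
    intro hcontra
    have h2 := congrArg Multiplicative.toAdd hcontra
    simp at h2
  · rw [map_inv, chiH_of, if_pos heq]
    intro hcontra
    rw [inv_eq_one] at hcontra
    have h2 := congrArg Multiplicative.toAdd hcontra
    simp at h2

lemma word_eq_imp_pco_eq {w : List A} {a b a0 b0 : A}
    (h : toFG (a :: (w ++ [b])) = toFG (a0 :: (w ++ [b0]))) : a = a0 ∧ b = b0 := by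
  have hl := toFG_injective h
  rw [List.cons.injEq] at hl
  refine ⟨hl.1, ?_⟩
  have := List.append_cancel_left hl.2
  exact List.singleton_injective this

lemma chi_walkProd_of_avoid {S : Set (List A)} {w : List A}
    {u0 v0 : ExtVertex S w} (h0 : (extGraph S w).Adj u0 v0)
    {x y : ExtVertex S w} (q : (extGraph S w).Walk x y)
    (havoid : ∀ e ∈ q.edges, e ≠ s(u0, v0)) :
    chiH (S := S) (w := w) (toFG ((pco u0 v0).1 :: (w ++ [(pco u0 v0).2]))) (walkProd q) = 1 := by
  induction q with
  | nil => simp [walkProd]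
  | @cons a b c h q ih =>
      rw [walkProd, map_mul]
      have hne : toFG ((pco a b).1 :: (w ++ [(pco a b).2]))
          ≠ toFG ((pco u0 v0).1 :: (w ++ [(pco u0 v0).2])) := by
        intro heq
        obtain ⟨e1, e2⟩ := word_eq_imp_pco_eq heq
        have hpc : pco a b = pco u0 v0 := Prod.ext e1 e2
        exact havoid _ (by rw [SimpleGraph.Walk.edges_cons]; exact List.mem_cons_self)
          (pco_eq_imp_edge_eq h h0 hpc)
      rw [chi_psi_ne h _ hne, one_mul]
      exact ih (fun e he => havoid e (by rw [SimpleGraph.Walk.edges_cons]; exact List.mem_cons_of_mem _ he))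


/-- Let `S` be a biextendable set and `w ∈ S`. If the set
`A w A ∩ S`, viewed in the free group `F_A`, is free and independent (i.e. a basis of the
subgroup it generates), then the extension graph `G(w)` is acyclic. -/
theorem independent_extensions_implies_acyclic {A : Type*} (S : Set (List A))
    (hbi : ∀ w ∈ S, (Eext S w).Nonempty) (w : List A) (hw : w ∈ S)
    (hind : Function.Injective (FreeGroup.lift
      (Subtype.val : (toFG '' {u ∈ S | ∃ a b : A, u = a :: (w ++ [b])}) → FreeGroup A))) :
    (extGraph S w).IsAcyclic := by
  have hind' : Function.Injective
      (FreeGroup.lift (Subtype.val : (Tset S w) → FreeGroup A)) := hind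
  intro v c hc
  cases c with
  | nil => exact hc.ne_nil rfl
  | cons h q =>
      rename_i v1
      have hP : walkProd (SimpleGraph.Walk.cons h q) = 1 := by
        apply hind'
        rw [lift_walkProd, map_one]
        group
      have h1 : chiH (toFG ((pco v v1).1 :: (w ++ [(pco v v1).2])))
          (walkProd (SimpleGraph.Walk.cons h q)) = 1 := by rw [hP, map_one]
      rw [walkProd, map_mul] at h1
      have hnodup := hc.edges_nodup
      rw [SimpleGraph.Walk.edges_cons] at hnodup
      have hq : chiH (toFG ((pco v v1).1 :: (w ++ [(pco v v1).2]))) (walkProd q) = 1 :=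
        chi_walkProd_of_avoid h q
          (fun e he heq => (List.nodup_cons.mp hnodup).1 (heq ▸ he))
      rw [hq, mul_one] at h1
      exact chi_psi_eq h _ rfl h1


end Paper
end

section
/- Let A = {a,b,c} and let S be the set of factors of words in a*{bc, bcbc}a* (i.e., factors of words of the form a^i bc a^j and a^i bcbc a^j for i,j ≥ 0). Then S is neutral: e(w) = ℓ(w) + r(w) − 1 for every w ∈ S; but S is not acyclic, since the extension graph G(ε) of the empty word contains a cycle. -/
namespace Paper

variable {A : Type*}

/-- The set of factors of `a* {bc, bcbc} a*` over `A = {a, b, c}` encoded as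
`a = 0`, `b = 1`, `c = 2` in `Fin 3`. -/
def exampleS : Set (List (Fin 3)) :=
  {w | ∃ i j : ℕ,
    w <:+: (List.replicate i 0 ++ [1, 2] ++ List.replicate j 0) ∨
    w <:+: (List.replicate i 0 ++ [1, 2, 1, 2] ++ List.replicate j 0)}

def rep (n : ℕ) : List (Fin 3) := List.replicate n 0

@[simp] lemma rep_zero : rep 0 = [] := rfl
lemma rep_succ (n : ℕ) : rep (n+1) = 0 :: rep n := rfl
lemma rep_succ' (n : ℕ) : rep (n+1) = rep n ++ [0] := List.replicate_succ' ..

def P (w : List (Fin 3)) : Prop :=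
  (∃ n, w = rep n) ∨
  (∃ i, w = rep i ++ [1]) ∨
  (∃ j, w = 2 :: rep j) ∨
  (∃ i j, w = rep i ++ [1,2] ++ rep j) ∨
  (w = [2,1]) ∨
  (∃ i, w = rep i ++ [1,2,1]) ∨
  (∃ j, w = [2,1,2] ++ rep j) ∨
  (∃ i j, w = rep i ++ [1,2,1,2] ++ rep j)

lemma P_tail {w : List (Fin 3)} (hw : P w) : P w.tail := by
  rcases hw with ⟨n, rfl⟩ | ⟨i, rfl⟩ | ⟨j, rfl⟩ | ⟨i, j, rfl⟩ | rfl | ⟨i, rfl⟩ | ⟨j, rfl⟩ | ⟨i, j, rfl⟩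
  · cases n with
    | zero => exact Or.inl ⟨0, rfl⟩
    | succ m => exact Or.inl ⟨m, by simp [rep_succ]⟩
  · cases i with
    | zero => exact Or.inl ⟨0, rfl⟩
    | succ m => exact Or.inr (Or.inl ⟨m, by simp [rep_succ]⟩)
  · exact Or.inl ⟨j, by simp⟩
  · cases i with
    | zero => exact Or.inr (Or.inr (Or.inl ⟨j, by simp⟩))
    | succ m => exact Or.inr (Or.inr (Or.inr (Or.inl ⟨m, j, by simp [rep_succ]⟩)))
  · exact Or.inr (Or.inl ⟨0, rfl⟩)
  · cases i with
    | zero => exact Or.inr (Or.inr (Or.inr (Or.inr (Or.inl (by simp)))))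
    | succ m => exact Or.inr (Or.inr (Or.inr (Or.inr (Or.inr (Or.inl ⟨m, by simp [rep_succ]⟩)))))
  · exact Or.inr (Or.inr (Or.inr (Or.inl ⟨0, j, by simp⟩)))
  · cases i with
    | zero => exact Or.inr (Or.inr (Or.inr (Or.inr (Or.inr (Or.inr (Or.inl ⟨j, by simp⟩))))))
    | succ m => exact Or.inr (Or.inr (Or.inr (Or.inr (Or.inr (Or.inr (Or.inr ⟨m, j, by simp [rep_succ]⟩))))))

lemma P_dropLast {w : List (Fin 3)} (hw : P w) : P w.dropLast := by
  rcases hw with ⟨n, rfl⟩ | ⟨i, rfl⟩ | ⟨j, rfl⟩ | ⟨i, j, rfl⟩ | rfl | ⟨i, rfl⟩ | ⟨j, rfl⟩ | ⟨i, j, rfl⟩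
  · cases n with
    | zero => exact Or.inl ⟨0, rfl⟩
    | succ m => exact Or.inl ⟨m, by simp [rep_succ', List.dropLast_concat]⟩
  · exact Or.inl ⟨i, by simp [List.dropLast_concat]⟩
  · cases j with
    | zero => exact Or.inl ⟨0, rfl⟩
    | succ m =>
        refine Or.inr (Or.inr (Or.inl ⟨m, ?_⟩))
        rw [rep_succ', show (2:Fin 3) :: (rep m ++ [0]) = (2 :: rep m) ++ [0] by simp,
          List.dropLast_concat]
  · cases j with
    | zero =>
        refine Or.inr (Or.inl ⟨i, ?_⟩)
        rw [show rep i ++ [1,2] ++ rep 0 = (rep i ++ [1]) ++ [2] by simp, List.dropLast_concat]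
    | succ m =>
        refine Or.inr (Or.inr (Or.inr (Or.inl ⟨i, m, ?_⟩)))
        rw [rep_succ', show rep i ++ [1,2] ++ (rep m ++ [0]) = (rep i ++ [1,2] ++ rep m) ++ [0] by simp,
          List.dropLast_concat]
  · exact Or.inr (Or.inr (Or.inl ⟨0, rfl⟩))
  · refine Or.inr (Or.inr (Or.inr (Or.inl ⟨i, 0, ?_⟩)))
    rw [show rep i ++ [1,2,1] = (rep i ++ [1,2]) ++ [1] by simp, List.dropLast_concat]; simp
  · cases j with
    | zero => exact Or.inr (Or.inr (Or.inr (Or.inr (Or.inl (by simp)))))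
    | succ m =>
        refine Or.inr (Or.inr (Or.inr (Or.inr (Or.inr (Or.inr (Or.inl ⟨m, ?_⟩))))))
        rw [rep_succ', show ([2,1,2] : List (Fin 3)) ++ (rep m ++ [0]) = ([2,1,2] ++ rep m) ++ [0] by simp,
          List.dropLast_concat]
  · cases j with
    | zero =>
        refine Or.inr (Or.inr (Or.inr (Or.inr (Or.inr (Or.inl ⟨i, ?_⟩)))))
        rw [show rep i ++ [1,2,1,2] ++ rep 0 = (rep i ++ [1,2,1]) ++ [2] by simp, List.dropLast_concat]
    | succ m =>
        refine Or.inr (Or.inr (Or.inr (Or.inr (Or.inr (Or.inr (Or.inr ⟨i, m, ?_⟩))))))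
        rw [rep_succ', show rep i ++ [1,2,1,2] ++ (rep m ++ [0]) = (rep i ++ [1,2,1,2] ++ rep m) ++ [0] by simp,
          List.dropLast_concat]

lemma P_infix : ∀ (n : ℕ) (w : List (Fin 3)), w.length ≤ n → P w → ∀ u, u <:+: w → P u := by
  intro n
  induction n with
  | zero =>
      intro w hl hw u hu
      have hw0 : w = [] := List.length_eq_zero_iff.mp (Nat.le_zero.mp hl)
      subst hw0
      have : u = [] := List.eq_nil_of_infix_nil hu
      subst this; exact hw
  | succ n ih =>
      intro w hl hw u hu
      obtain ⟨p, s, hps⟩ := hu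
      match p, s with
      | [], [] => simp at hps; subst hps; exact hw
      | (x::p'), s =>
          have hlen : w.tail.length ≤ n := by
            have := congrArg List.length hps
            simp at this ⊢
            omega
          have ht : w.tail = p' ++ u ++ s := by rw [← hps]; rfl
          exact ih w.tail hlen (P_tail hw) u ⟨p', s, ht.symm⟩
      | [], (y::s') =>
          have hw' : w = u ++ (y :: s') := by simpa using hps.symm
          have hd : w.dropLast = u ++ (y::s').dropLast := by
            rw [hw', List.dropLast_append_cons]
          have hlen : w.dropLast.length ≤ n := by
            have := congrArg List.length hw'
            simp at this ⊢
            omega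
          exact ih w.dropLast hlen (P_dropLast hw) u ⟨[], (y::s').dropLast, by simp [hd]⟩

lemma mem_S_iff {w : List (Fin 3)} : w ∈ exampleS ↔ P w := by
  constructor
  · rintro ⟨i, j, h | h⟩
    · exact P_infix _ _ le_rfl (Or.inr (Or.inr (Or.inr (Or.inl ⟨i, j, rfl⟩)))) w h
    · exact P_infix _ _ le_rfl (Or.inr (Or.inr (Or.inr (Or.inr (Or.inr (Or.inr (Or.inr ⟨i, j, rfl⟩))))))) w h
  · rintro (⟨n, rfl⟩ | ⟨i, rfl⟩ | ⟨j, rfl⟩ | ⟨i, j, rfl⟩ | rfl | ⟨i, rfl⟩ | ⟨j, rfl⟩ | ⟨i, j, rfl⟩)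
    · exact ⟨n, 0, Or.inl ⟨[], [1,2], by simp [rep]⟩⟩
    · exact ⟨i, 0, Or.inl ⟨[], [2], by simp [rep]⟩⟩
    · exact ⟨0, j, Or.inl ⟨[1], [], by simp [rep]⟩⟩
    · exact ⟨i, j, Or.inl ⟨[], [], by simp [rep]⟩⟩
    · exact ⟨0, 0, Or.inr ⟨[1], [2], by simp [rep]⟩⟩
    · exact ⟨i, 0, Or.inr ⟨[], [2], by simp [rep]⟩⟩
    · exact ⟨0, j, Or.inr ⟨[1], [], by simp [rep]⟩⟩
    · exact ⟨i, j, Or.inr ⟨[], [], by simp [rep]⟩⟩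


lemma S_infix {w u : List (Fin 3)} (hw : w ∈ exampleS) (h : u <:+: w) : u ∈ exampleS :=
  mem_S_iff.mpr (P_infix _ _ le_rfl (mem_S_iff.mp hw) u h)

-- S is factorial / non-membership lifting
lemma not_mem_of_infix {u w : List (Fin 3)} (h : u ∉ exampleS) (hi : u <:+: w) :
    w ∉ exampleS := fun hw => h (S_infix hw hi)

lemma mem1 (n : ℕ) : rep n ∈ exampleS := mem_S_iff.mpr (Or.inl ⟨n, rfl⟩)
lemma mem2 (i : ℕ) : rep i ++ [1] ∈ exampleS := mem_S_iff.mpr (Or.inr (Or.inl ⟨i, rfl⟩))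
lemma mem3 (j : ℕ) : (2 : Fin 3) :: rep j ∈ exampleS := mem_S_iff.mpr (Or.inr (Or.inr (Or.inl ⟨j, rfl⟩)))
lemma mem4 (i j : ℕ) : rep i ++ [1,2] ++ rep j ∈ exampleS :=
  mem_S_iff.mpr (Or.inr (Or.inr (Or.inr (Or.inl ⟨i, j, rfl⟩))))
lemma mem5 : ([2,1] : List (Fin 3)) ∈ exampleS :=
  mem_S_iff.mpr (Or.inr (Or.inr (Or.inr (Or.inr (Or.inl rfl)))))
lemma mem6 (i : ℕ) : rep i ++ [1,2,1] ∈ exampleS :=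
  mem_S_iff.mpr (Or.inr (Or.inr (Or.inr (Or.inr (Or.inr (Or.inl ⟨i, rfl⟩))))))
lemma mem7 (j : ℕ) : ([2,1,2] : List (Fin 3)) ++ rep j ∈ exampleS :=
  mem_S_iff.mpr (Or.inr (Or.inr (Or.inr (Or.inr (Or.inr (Or.inr (Or.inl ⟨j, rfl⟩)))))))
lemma mem8 (i j : ℕ) : rep i ++ [1,2,1,2] ++ rep j ∈ exampleS :=
  mem_S_iff.mpr (Or.inr (Or.inr (Or.inr (Or.inr (Or.inr (Or.inr (Or.inr ⟨i, j, rfl⟩)))))))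

lemma count1_rep (n : ℕ) : (rep n).count 1 = 0 := by
  rw [rep, List.count_replicate, if_neg (by decide)]
lemma count2_rep (n : ℕ) : (rep n).count 2 = 0 := by
  rw [rep, List.count_replicate, if_neg (by decide)]
lemma len_rep (n : ℕ) : (rep n).length = n := by simp [rep]

-- forbidden words
lemma N1 : ([0,2] : List (Fin 3)) ∉ exampleS := by
  rw [mem_S_iff]
  rintro (⟨n, h⟩ | ⟨i, h⟩ | ⟨j, h⟩ | ⟨i, j, h⟩ | h | ⟨i, h⟩ | ⟨j, h⟩ | ⟨i, j, h⟩) <;>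
    first
      | (have h1 := congrArg (List.count 1) h
         have h2 := congrArg (List.count 2) h
         simp [count1_rep, count2_rep, List.count_cons, List.count_append] at h1 h2)
      | skip
  · -- [0,2] = 2 :: rep j
    simp at h
  all_goals simp_all

lemma N2 : ([1,0] : List (Fin 3)) ∉ exampleS := by
  rw [mem_S_iff]
  rintro (⟨n, h⟩ | ⟨i, h⟩ | ⟨j, h⟩ | ⟨i, j, h⟩ | h | ⟨i, h⟩ | ⟨j, h⟩ | ⟨i, j, h⟩) <;>
    first
      | (have h1 := congrArg (List.count 1) h
         have h2 := congrArg (List.count 2) h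
         simp [count1_rep, count2_rep, List.count_cons, List.count_append] at h1 h2)
      | skip
  · -- [1,0] = rep i ++ [1]
    have hl := congrArg List.length h
    simp [len_rep] at hl
    subst hl
    simp [rep] at h
  all_goals simp_all

lemma N3 : ([1,1] : List (Fin 3)) ∉ exampleS := by
  rw [mem_S_iff]
  rintro (⟨n, h⟩ | ⟨i, h⟩ | ⟨j, h⟩ | ⟨i, j, h⟩ | h | ⟨i, h⟩ | ⟨j, h⟩ | ⟨i, j, h⟩) <;>
    (have h1 := congrArg (List.count 1) h
     have h2 := congrArg (List.count 2) h
     simp [count1_rep, count2_rep, List.count_cons, List.count_append] at h1 h2)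

lemma N4 : ([2,2] : List (Fin 3)) ∉ exampleS := by
  rw [mem_S_iff]
  rintro (⟨n, h⟩ | ⟨i, h⟩ | ⟨j, h⟩ | ⟨i, j, h⟩ | h | ⟨i, h⟩ | ⟨j, h⟩ | ⟨i, j, h⟩) <;>
    (have h1 := congrArg (List.count 1) h
     have h2 := congrArg (List.count 2) h
     simp [count1_rep, count2_rep, List.count_cons, List.count_append] at h1 h2)

lemma N6 : ([2,1,2,1] : List (Fin 3)) ∉ exampleS := by
  rw [mem_S_iff]
  rintro (⟨n, h⟩ | ⟨i, h⟩ | ⟨j, h⟩ | ⟨i, j, h⟩ | h | ⟨i, h⟩ | ⟨j, h⟩ | ⟨i, j, h⟩) <;>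
    first
      | (have h1 := congrArg (List.count 1) h
         have h2 := congrArg (List.count 2) h
         simp [count1_rep, count2_rep, List.count_cons, List.count_append] at h1 h2)
      | skip
  · -- [2,1,2,1] = rep i ++ [1,2,1,2] ++ rep j
    have hl := congrArg List.length h
    simp [len_rep] at hl
    obtain ⟨rfl, rfl⟩ : i = 0 ∧ j = 0 := by omega
    simp [rep] at h

lemma N5 (n : ℕ) : (2 : Fin 3) :: rep (n+1) ++ [1] ∉ exampleS := by
  rw [mem_S_iff]
  rintro (⟨m, h⟩ | ⟨i, h⟩ | ⟨j, h⟩ | ⟨i, j, h⟩ | h | ⟨i, h⟩ | ⟨j, h⟩ | ⟨i, j, h⟩) <;>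
    first
      | (have h1 := congrArg (List.count 1) h
         have h2 := congrArg (List.count 2) h
         simp [count1_rep, count2_rep, List.count_cons, List.count_append] at h1 h2)
      | skip
  · -- = rep i ++ [1,2] ++ rep j
    cases i with
    | zero => simp [rep_succ, rep] at h
    | succ m => rw [rep_succ] at h; simp [rep_succ] at h
  · -- = [2,1]
    have hl := congrArg List.length h
    simp [len_rep] at hl


@[simp] lemma cons0 (n : ℕ) : (0 : Fin 3) :: rep n = rep (n+1) := rfl
@[simp] lemma cons0' (n : ℕ) (l : List (Fin 3)) : (0 : Fin 3) :: (rep n ++ l) = rep (n+1) ++ l := rfl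
@[simp] lemma snoc0' (n : ℕ) (l : List (Fin 3)) : rep n ++ 0 :: l = rep (n+1) ++ l := by
  rw [rep_succ', List.append_assoc]; rfl
@[simp] lemma snoc0 (n : ℕ) : rep n ++ [0] = rep (n+1) := (rep_succ' n).symm



-- normalized membership lemmas
lemma mem1' (n : ℕ) : rep n ∈ exampleS := mem1 n
lemma mem2' (i : ℕ) : rep i ++ [1] ∈ exampleS := mem2 i
lemma mem3' (j : ℕ) : (2 : Fin 3) :: rep j ∈ exampleS := mem3 j
lemma mem4' (i j : ℕ) : rep i ++ 1 :: 2 :: rep j ∈ exampleS := by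
  simpa [List.append_assoc] using mem4 i j
lemma mem5' : ([2,1] : List (Fin 3)) ∈ exampleS := mem5
lemma mem6' (i : ℕ) : rep i ++ [1,2,1] ∈ exampleS := mem6 i
lemma mem7' (j : ℕ) : (2 : Fin 3) :: 1 :: 2 :: rep j ∈ exampleS := mem7 j
lemma mem8' (i j : ℕ) : rep i ++ 1 :: 2 :: 1 :: 2 :: rep j ∈ exampleS := by
  simpa [List.append_assoc] using mem8 i j
lemma N5' (n : ℕ) : (2 : Fin 3) :: (rep (n+1) ++ [1]) ∉ exampleS := N5 n

@[simp] lemma mem_Lext {S : Set (List (Fin 3))} {w : List (Fin 3)} {x : Fin 3} :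
    x ∈ Lext S w ↔ x :: w ∈ S := Iff.rfl
@[simp] lemma mem_Rext {S : Set (List (Fin 3))} {w : List (Fin 3)} {x : Fin 3} :
    x ∈ Rext S w ↔ w ++ [x] ∈ S := Iff.rfl
@[simp] lemma mem_Eext {S : Set (List (Fin 3))} {w : List (Fin 3)} {p : Fin 3 × Fin 3} :
    p ∈ Eext S w ↔ p.1 :: (w ++ [p.2]) ∈ S := Iff.rfl

lemma E_subset (w : List (Fin 3)) : Eext exampleS w ⊆ (Lext exampleS w) ×ˢ (Rext exampleS w) :=
  fun p h => ⟨S_infix h ⟨[], [p.2], by simp⟩, S_infix h ⟨[p.1], [], by simp⟩⟩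

lemma finish {w : List (Fin 3)} {L R : Finset (Fin 3)} {E : Finset (Fin 3 × Fin 3)}
    (hL : Lext exampleS w = ↑L) (hR : Rext exampleS w = ↑R) (hE : Eext exampleS w = ↑E)
    (h : (E.card : ℤ) = L.card + R.card - 1) :
    ((Eext exampleS w).ncard : ℤ)
      = (Lext exampleS w).ncard + (Rext exampleS w).ncard - 1 := by
  rw [hL, hR, hE, Set.ncard_coe_finset, Set.ncard_coe_finset, Set.ncard_coe_finset]; exact h

lemma E_singleton {w : List (Fin 3)} {x y : Fin 3}
    (hL : Lext exampleS w = ↑({x} : Finset (Fin 3)))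
    (hR : Rext exampleS w = ↑({y} : Finset (Fin 3)))
    (hxy : x :: (w ++ [y]) ∈ exampleS) :
    Eext exampleS w = ↑({(x, y)} : Finset (Fin 3 × Fin 3)) := by
  apply subset_antisymm
  · intro p hp
    have hm := E_subset _ hp
    rw [hL, hR] at hm
    simp only [Set.mem_prod, Finset.coe_singleton, Set.mem_singleton_iff] at hm
    simp [Prod.ext_iff, hm.1, hm.2]
  · intro p hp
    simp only [Finset.coe_singleton, Set.mem_singleton_iff] at hp
    subst hp
    exact hxy

set_option maxHeartbeats 2000000 in
lemma neutral : ∀ w ∈ exampleS, ((Eext exampleS w).ncard : ℤ)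
    = (Lext exampleS w).ncard + (Rext exampleS w).ncard - 1 := by
  intro w hw
  rw [mem_S_iff] at hw
  rcases hw with ⟨n, rfl⟩ | ⟨i, rfl⟩ | ⟨j, rfl⟩ | ⟨i, j, rfl⟩ | rfl | ⟨i, rfl⟩ | ⟨j, rfl⟩ | ⟨i, j, rfl⟩
  · -- w = rep n
    rcases n with _ | n
    · refine finish (L := {0,1,2}) (R := {0,1,2}) (E := {(0,0),(0,1),(1,2),(2,0),(2,1)}) ?_ ?_ ?_ (by decide)
      · ext x; fin_cases x
        · simp [Prod.ext_iff]; exact mem1' 1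
        · simp [Prod.ext_iff]; exact mem2' 0
        · simp [Prod.ext_iff]; exact mem3' 0
      · ext x; fin_cases x
        · simp [Prod.ext_iff]; exact mem1' 1
        · simp [Prod.ext_iff]; exact mem2' 0
        · simp [Prod.ext_iff]; exact mem3' 0
      · ext ⟨x, y⟩; fin_cases x <;> fin_cases y
        · simp [Prod.ext_iff]; exact mem1' 2
        · simp [Prod.ext_iff]; exact mem2' 1
        · simp [Prod.ext_iff]; exact N1
        · simp [Prod.ext_iff]; exact N2
        · simp [Prod.ext_iff]; exact N3
        · simp [Prod.ext_iff]; exact mem4' 0 0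
        · simp [Prod.ext_iff]; exact mem3' 1
        · simp [Prod.ext_iff]; exact mem5'
        · simp [Prod.ext_iff]; exact N4
    · refine finish (L := {0,2}) (R := {0,1}) (E := {(0,0),(0,1),(2,0)}) ?_ ?_ ?_ (by decide)
      · ext x; fin_cases x
        · simp [Prod.ext_iff]; exact mem1' (n+2)
        · simp [Prod.ext_iff]; exact not_mem_of_infix N2 ⟨[], rep n, by simp⟩
        · simp [Prod.ext_iff]; exact mem3' (n+1)
      · ext x; fin_cases x
        · simp [Prod.ext_iff]; exact mem1' (n+2)
        · simp [Prod.ext_iff]; exact mem2' (n+1)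
        · simp [Prod.ext_iff]; exact not_mem_of_infix N1 ⟨rep n, [], by simp⟩
      · ext ⟨x, y⟩; fin_cases x <;> fin_cases y
        · simp [Prod.ext_iff]; exact mem1' (n+3)
        · simp [Prod.ext_iff]; exact mem2' (n+2)
        · simp [Prod.ext_iff]; exact not_mem_of_infix N1 ⟨rep (n+1), [], by simp⟩
        · simp [Prod.ext_iff]; exact not_mem_of_infix N2 ⟨[], rep n ++ [0], by simp⟩
        · simp [Prod.ext_iff]; exact not_mem_of_infix N2 ⟨[], rep n ++ [1], by simp⟩
        · simp [Prod.ext_iff]; exact not_mem_of_infix N2 ⟨[], rep n ++ [2], by simp⟩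
        · simp [Prod.ext_iff]; exact mem3' (n+2)
        · simp [Prod.ext_iff]; exact N5' n
        · simp [Prod.ext_iff]; exact not_mem_of_infix N1 ⟨2 :: rep n, [], by simp⟩
  · -- w = rep i ++ [1]
    rcases i with _ | i
    · refine finish (L := {0,2}) (R := {2}) (E := {(0,2),(2,2)}) ?_ ?_ ?_ (by decide)
      · ext x; fin_cases x
        · simp [Prod.ext_iff]; exact mem2' 1
        · simp [Prod.ext_iff]; exact N3
        · simp [Prod.ext_iff]; exact mem5'
      · ext x; fin_cases x
        · simp [Prod.ext_iff]; exact N2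
        · simp [Prod.ext_iff]; exact N3
        · simp [Prod.ext_iff]; exact mem4' 0 0
      · ext ⟨x, y⟩; fin_cases x <;> fin_cases y
        · simp [Prod.ext_iff]; exact not_mem_of_infix N2 ⟨[0], [], by simp⟩
        · simp [Prod.ext_iff]; exact not_mem_of_infix N3 ⟨[0], [], by simp⟩
        · simp [Prod.ext_iff]; exact mem4' 1 0
        · simp [Prod.ext_iff]; exact not_mem_of_infix N3 ⟨[], [0], by simp⟩
        · simp [Prod.ext_iff]; exact not_mem_of_infix N3 ⟨[], [1], by simp⟩
        · simp [Prod.ext_iff]; exact not_mem_of_infix N3 ⟨[], [2], by simp⟩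
        · simp [Prod.ext_iff]; exact not_mem_of_infix N2 ⟨[2], [], by simp⟩
        · simp [Prod.ext_iff]; exact not_mem_of_infix N3 ⟨[2], [], by simp⟩
        · simp [Prod.ext_iff]; exact mem7' 0
    · have hL : Lext exampleS (rep (i+1) ++ [1]) = ↑({0} : Finset (Fin 3)) := by
        ext x; fin_cases x
        · simp [Prod.ext_iff]; exact mem2' (i+2)
        · simp [Prod.ext_iff]; exact not_mem_of_infix N2 ⟨[], rep i ++ [1], by simp⟩
        · simp [Prod.ext_iff]; exact N5' i
      have hR : Rext exampleS (rep (i+1) ++ [1]) = ↑({2} : Finset (Fin 3)) := by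
        ext x; fin_cases x
        · simp [Prod.ext_iff]; exact not_mem_of_infix N2 ⟨rep (i+1), [], by simp⟩
        · simp [Prod.ext_iff]; exact not_mem_of_infix N3 ⟨rep (i+1), [], by simp⟩
        · simp [Prod.ext_iff]; exact mem4' (i+1) 0
      exact finish hL hR (E_singleton hL hR (by simpa using mem4' (i+2) 0)) (by decide)
  · -- w = 2 :: rep j
    rcases j with _ | j
    · refine finish (L := {1}) (R := {0,1}) (E := {(1,0),(1,1)}) ?_ ?_ ?_ (by decide)
      · ext x; fin_cases x
        · simp [Prod.ext_iff]; exact N1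
        · simp [Prod.ext_iff]; exact mem4' 0 0
        · simp [Prod.ext_iff]; exact N4
      · ext x; fin_cases x
        · simp [Prod.ext_iff]; exact mem3' 1
        · simp [Prod.ext_iff]; exact mem5'
        · simp [Prod.ext_iff]; exact N4
      · ext ⟨x, y⟩; fin_cases x <;> fin_cases y
        · simp [Prod.ext_iff]; exact not_mem_of_infix N1 ⟨[], [0], by simp⟩
        · simp [Prod.ext_iff]; exact not_mem_of_infix N1 ⟨[], [1], by simp⟩
        · simp [Prod.ext_iff]; exact not_mem_of_infix N1 ⟨[], [2], by simp⟩
        · simp [Prod.ext_iff]; exact mem4' 0 1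
        · simp [Prod.ext_iff]; exact mem6' 0
        · simp [Prod.ext_iff]; exact not_mem_of_infix N4 ⟨[1], [], by simp⟩
        · simp [Prod.ext_iff]; exact not_mem_of_infix N4 ⟨[], [0], by simp⟩
        · simp [Prod.ext_iff]; exact not_mem_of_infix N4 ⟨[], [1], by simp⟩
        · simp [Prod.ext_iff]; exact not_mem_of_infix N4 ⟨[], [2], by simp⟩
    · have hL : Lext exampleS (2 :: rep (j+1)) = ↑({1} : Finset (Fin 3)) := by
        ext x; fin_cases x
        · simp [Prod.ext_iff]; exact not_mem_of_infix N1 ⟨[], rep (j+1), by simp⟩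
        · simp [Prod.ext_iff]; exact mem4' 0 (j+1)
        · simp [Prod.ext_iff]; exact not_mem_of_infix N4 ⟨[], rep (j+1), by simp⟩
      have hR : Rext exampleS (2 :: rep (j+1)) = ↑({0} : Finset (Fin 3)) := by
        ext x; fin_cases x
        · simp [Prod.ext_iff]; exact mem3' (j+2)
        · simp [Prod.ext_iff]; exact N5' j
        · simp [Prod.ext_iff]; exact not_mem_of_infix N1 ⟨2 :: rep j, [], by simp⟩
      exact finish hL hR (E_singleton hL hR (by simpa using mem4' 0 (j+2))) (by decide)
  · -- w = rep i ++ [1,2] ++ rep j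
    rcases i with _ | i <;> rcases j with _ | j
    · refine finish (L := {0,2}) (R := {0,1}) (E := {(0,0),(0,1),(2,0)}) ?_ ?_ ?_ (by decide)
      · ext x; fin_cases x
        · simp [Prod.ext_iff]; exact mem4' 1 0
        · simp [Prod.ext_iff]; exact not_mem_of_infix N3 ⟨[], [2], by simp⟩
        · simp [Prod.ext_iff]; exact mem7' 0
      · ext x; fin_cases x
        · simp [Prod.ext_iff]; exact mem4' 0 1
        · simp [Prod.ext_iff]; exact mem6' 0
        · simp [Prod.ext_iff]; exact not_mem_of_infix N4 ⟨[1], [], by simp⟩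
      · ext ⟨x, y⟩; fin_cases x <;> fin_cases y
        · simp [Prod.ext_iff]; exact mem4' 1 1
        · simp [Prod.ext_iff]; exact mem6' 1
        · simp [Prod.ext_iff]; exact not_mem_of_infix N4 ⟨[0,1], [], by simp⟩
        · simp [Prod.ext_iff]; exact not_mem_of_infix N3 ⟨[], [2,0], by simp⟩
        · simp [Prod.ext_iff]; exact not_mem_of_infix N3 ⟨[], [2,1], by simp⟩
        · simp [Prod.ext_iff]; exact not_mem_of_infix N3 ⟨[], [2,2], by simp⟩
        · simp [Prod.ext_iff]; exact mem7' 1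
        · simp [Prod.ext_iff]; exact N6
        · simp [Prod.ext_iff]; exact not_mem_of_infix N4 ⟨[2,1], [], by simp⟩
    · -- i = 0, j+1
      refine finish (L := {0,2}) (R := {0}) (E := {(0,0),(2,0)}) ?_ ?_ ?_ (by decide)
      · ext x; fin_cases x
        · simp [Prod.ext_iff]; exact mem4' 1 (j+1)
        · simp [Prod.ext_iff]; exact not_mem_of_infix N3 ⟨[], 2 :: rep (j+1), by simp⟩
        · simp [Prod.ext_iff]; exact mem7' (j+1)
      · ext x; fin_cases x
        · simp [Prod.ext_iff]; exact mem4' 0 (j+2)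
        · simp [Prod.ext_iff]; exact not_mem_of_infix (N5 j) ⟨[1], [], by simp⟩
        · simp [Prod.ext_iff]; exact not_mem_of_infix N1 ⟨1 :: 2 :: rep j, [], by simp⟩
      · ext ⟨x, y⟩; fin_cases x <;> fin_cases y
        · simp [Prod.ext_iff]; exact mem4' 1 (j+2)
        · simp [Prod.ext_iff]; exact not_mem_of_infix (N5 j) ⟨[0,1], [], by simp⟩
        · simp [Prod.ext_iff]; exact not_mem_of_infix N1 ⟨0 :: 1 :: 2 :: rep j, [], by simp⟩
        · simp [Prod.ext_iff]; exact not_mem_of_infix N3 ⟨[], 2 :: rep (j+1) ++ [0], by simp⟩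
        · simp [Prod.ext_iff]; exact not_mem_of_infix N3 ⟨[], 2 :: rep (j+1) ++ [1], by simp⟩
        · simp [Prod.ext_iff]; exact not_mem_of_infix N3 ⟨[], 2 :: rep (j+1) ++ [2], by simp⟩
        · simp [Prod.ext_iff]; exact mem7' (j+2)
        · simp [Prod.ext_iff]; exact not_mem_of_infix (N5 j) ⟨[2,1], [], by simp⟩
        · simp [Prod.ext_iff]; exact not_mem_of_infix N1 ⟨2 :: 1 :: 2 :: rep j, [], by simp⟩
    · -- i+1, j = 0
      refine finish (L := {0}) (R := {0,1}) (E := {(0,0),(0,1)}) ?_ ?_ ?_ (by decide)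
      · ext x; fin_cases x
        · simp [Prod.ext_iff]; exact mem4' (i+2) 0
        · simp [Prod.ext_iff]; exact not_mem_of_infix N2 ⟨[], rep i ++ [1,2], by simp⟩
        · simp [Prod.ext_iff]; exact not_mem_of_infix (N5 i) ⟨[], [2], by simp⟩
      · ext x; fin_cases x
        · simp [Prod.ext_iff]; exact mem4' (i+1) 1
        · simp [Prod.ext_iff]; exact mem6' (i+1)
        · simp [Prod.ext_iff]; exact not_mem_of_infix N4 ⟨rep (i+1) ++ [1], [], by simp⟩
      · ext ⟨x, y⟩; fin_cases x <;> fin_cases y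
        · simp [Prod.ext_iff]; exact mem4' (i+2) 1
        · simp [Prod.ext_iff]; exact mem6' (i+2)
        · simp [Prod.ext_iff]; exact not_mem_of_infix N4 ⟨rep (i+2) ++ [1], [], by simp⟩
        · simp [Prod.ext_iff]; exact not_mem_of_infix N2 ⟨[], rep i ++ [1,2,0], by simp⟩
        · simp [Prod.ext_iff]; exact not_mem_of_infix N2 ⟨[], rep i ++ [1,2,1], by simp⟩
        · simp [Prod.ext_iff]; exact not_mem_of_infix N2 ⟨[], rep i ++ [1,2,2], by simp⟩
        · simp [Prod.ext_iff]; exact not_mem_of_infix (N5 i) ⟨[], [2,0], by simp⟩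
        · simp [Prod.ext_iff]; exact not_mem_of_infix (N5 i) ⟨[], [2,1], by simp⟩
        · simp [Prod.ext_iff]; exact not_mem_of_infix (N5 i) ⟨[], [2,2], by simp⟩
    · -- i+1, j+1
      have hL : Lext exampleS (rep (i+1) ++ [1,2] ++ rep (j+1)) = ↑({0} : Finset (Fin 3)) := by
        ext x; fin_cases x
        · simp [Prod.ext_iff]; exact mem4' (i+2) (j+1)
        · simp [Prod.ext_iff]; exact not_mem_of_infix N2 ⟨[], rep i ++ [1,2] ++ rep (j+1), by simp⟩
        · simp [Prod.ext_iff]; exact not_mem_of_infix (N5 i) ⟨[], 2 :: rep (j+1), by simp⟩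
      have hR : Rext exampleS (rep (i+1) ++ [1,2] ++ rep (j+1)) = ↑({0} : Finset (Fin 3)) := by
        ext x; fin_cases x
        · simp [Prod.ext_iff]; exact mem4' (i+1) (j+2)
        · simp [Prod.ext_iff]; exact not_mem_of_infix (N5 j) ⟨rep (i+1) ++ [1], [], by simp⟩
        · simp [Prod.ext_iff]; exact not_mem_of_infix N1 ⟨rep (i+1) ++ [1,2] ++ rep j, [], by simp⟩
      exact finish hL hR (E_singleton hL hR (by simpa using mem4' (i+2) (j+2))) (by decide)
  · -- w = [2,1]
    have hL : Lext exampleS [2,1] = ↑({1} : Finset (Fin 3)) := by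
      ext x; fin_cases x
      · simp [Prod.ext_iff]; exact not_mem_of_infix N1 ⟨[], [1], by simp⟩
      · simp [Prod.ext_iff]; exact mem6' 0
      · simp [Prod.ext_iff]; exact not_mem_of_infix N4 ⟨[], [1], by simp⟩
    have hR : Rext exampleS [2,1] = ↑({2} : Finset (Fin 3)) := by
      ext x; fin_cases x
      · simp [Prod.ext_iff]; exact not_mem_of_infix N2 ⟨[2], [], by simp⟩
      · simp [Prod.ext_iff]; exact not_mem_of_infix N3 ⟨[2], [], by simp⟩
      · simp [Prod.ext_iff]; exact mem7' 0
    exact finish hL hR (E_singleton hL hR (by simpa using mem8' 0 0)) (by decide)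
  · -- w = rep i ++ [1,2,1]
    rcases i with _ | i
    · have hL : Lext exampleS (rep 0 ++ [1,2,1]) = ↑({0} : Finset (Fin 3)) := by
        ext x; fin_cases x
        · simp [Prod.ext_iff]; exact mem6' 1
        · simp [Prod.ext_iff]; exact not_mem_of_infix N3 ⟨[], [2,1], by simp⟩
        · simp [Prod.ext_iff]; exact N6
      have hR : Rext exampleS (rep 0 ++ [1,2,1]) = ↑({2} : Finset (Fin 3)) := by
        ext x; fin_cases x
        · simp [Prod.ext_iff]; exact not_mem_of_infix N2 ⟨[1,2], [], by simp⟩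
        · simp [Prod.ext_iff]; exact not_mem_of_infix N3 ⟨[1,2], [], by simp⟩
        · simp [Prod.ext_iff]; exact mem8' 0 0
      exact finish hL hR (E_singleton hL hR (by simpa [show rep 1 = [0] from rfl] using mem8' 1 0)) (by decide)
    · have hL : Lext exampleS (rep (i+1) ++ [1,2,1]) = ↑({0} : Finset (Fin 3)) := by
        ext x; fin_cases x
        · simp [Prod.ext_iff]; exact mem6' (i+2)
        · simp [Prod.ext_iff]; exact not_mem_of_infix N2 ⟨[], rep i ++ [1,2,1], by simp⟩
        · simp [Prod.ext_iff]; exact not_mem_of_infix (N5 i) ⟨[], [2,1], by simp⟩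
      have hR : Rext exampleS (rep (i+1) ++ [1,2,1]) = ↑({2} : Finset (Fin 3)) := by
        ext x; fin_cases x
        · simp [Prod.ext_iff]; exact not_mem_of_infix N2 ⟨rep (i+1) ++ [1,2], [], by simp⟩
        · simp [Prod.ext_iff]; exact not_mem_of_infix N3 ⟨rep (i+1) ++ [1,2], [], by simp⟩
        · simp [Prod.ext_iff]; exact mem8' (i+1) 0
      exact finish hL hR (E_singleton hL hR (by simpa using mem8' (i+2) 0)) (by decide)
  · -- w = [2,1,2] ++ rep j
    rcases j with _ | j
    · have hL : Lext exampleS ([2,1,2] ++ rep 0) = ↑({1} : Finset (Fin 3)) := by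
        ext x; fin_cases x
        · simp [Prod.ext_iff]; exact not_mem_of_infix N1 ⟨[], [1,2], by simp⟩
        · simp [Prod.ext_iff]; exact mem8' 0 0
        · simp [Prod.ext_iff]; exact not_mem_of_infix N4 ⟨[], [1,2], by simp⟩
      have hR : Rext exampleS ([2,1,2] ++ rep 0) = ↑({0} : Finset (Fin 3)) := by
        ext x; fin_cases x
        · simp [Prod.ext_iff]; exact mem7' 1
        · simp [Prod.ext_iff]; exact N6
        · simp [Prod.ext_iff]; exact not_mem_of_infix N4 ⟨[2,1], [], by simp⟩
      exact finish hL hR (E_singleton hL hR (by simpa [show rep 1 = [0] from rfl] using mem8' 0 1)) (by decide)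
    · have hL : Lext exampleS ([2,1,2] ++ rep (j+1)) = ↑({1} : Finset (Fin 3)) := by
        ext x; fin_cases x
        · simp [Prod.ext_iff]; exact not_mem_of_infix N1 ⟨[], 1 :: 2 :: rep (j+1), by simp⟩
        · simp [Prod.ext_iff]; exact mem8' 0 (j+1)
        · simp [Prod.ext_iff]; exact not_mem_of_infix N4 ⟨[], 1 :: 2 :: rep (j+1), by simp⟩
      have hR : Rext exampleS ([2,1,2] ++ rep (j+1)) = ↑({0} : Finset (Fin 3)) := by
        ext x; fin_cases x
        · simp [Prod.ext_iff]; exact mem7' (j+2)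
        · simp [Prod.ext_iff]; exact not_mem_of_infix (N5 j) ⟨[2,1], [], by simp⟩
        · simp [Prod.ext_iff]; exact not_mem_of_infix N1 ⟨2 :: 1 :: 2 :: rep j, [], by simp⟩
      exact finish hL hR (E_singleton hL hR (by simpa using mem8' 0 (j+2))) (by decide)
  · -- w = rep i ++ [1,2,1,2] ++ rep j
    rcases i with _ | i <;> rcases j with _ | j
    · have hL : Lext exampleS (rep 0 ++ [1,2,1,2] ++ rep 0) = ↑({0} : Finset (Fin 3)) := by
        ext x; fin_cases x
        · simp [Prod.ext_iff]; exact mem8' 1 0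
        · simp [Prod.ext_iff]; exact not_mem_of_infix N3 ⟨[], [2,1,2], by simp⟩
        · simp [Prod.ext_iff]; exact not_mem_of_infix N6 ⟨[], [2], by simp⟩
      have hR : Rext exampleS (rep 0 ++ [1,2,1,2] ++ rep 0) = ↑({0} : Finset (Fin 3)) := by
        ext x; fin_cases x
        · simp [Prod.ext_iff]; exact mem8' 0 1
        · simp [Prod.ext_iff]; exact not_mem_of_infix N6 ⟨[1], [], by simp⟩
        · simp [Prod.ext_iff]; exact not_mem_of_infix N4 ⟨[1,2,1], [], by simp⟩
      exact finish hL hR (E_singleton hL hR (by simpa [show rep 1 = [0] from rfl] using mem8' 1 1)) (by decide)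
    · have hL : Lext exampleS (rep 0 ++ [1,2,1,2] ++ rep (j+1)) = ↑({0} : Finset (Fin 3)) := by
        ext x; fin_cases x
        · simp [Prod.ext_iff]; exact mem8' 1 (j+1)
        · simp [Prod.ext_iff]; exact not_mem_of_infix N3 ⟨[], 2 :: 1 :: 2 :: rep (j+1), by simp⟩
        · simp [Prod.ext_iff]; exact not_mem_of_infix N6 ⟨[], 2 :: rep (j+1), by simp⟩
      have hR : Rext exampleS (rep 0 ++ [1,2,1,2] ++ rep (j+1)) = ↑({0} : Finset (Fin 3)) := by
        ext x; fin_cases x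
        · simp [Prod.ext_iff]; exact mem8' 0 (j+2)
        · simp [Prod.ext_iff]; exact not_mem_of_infix (N5 j) ⟨[1,2,1], [], by simp⟩
        · simp [Prod.ext_iff]; exact not_mem_of_infix N1 ⟨1 :: 2 :: 1 :: 2 :: rep j, [], by simp⟩
      exact finish hL hR (E_singleton hL hR (by simpa [show rep 1 = [0] from rfl] using mem8' 1 (j+2))) (by decide)
    · have hL : Lext exampleS (rep (i+1) ++ [1,2,1,2] ++ rep 0) = ↑({0} : Finset (Fin 3)) := by
        ext x; fin_cases x
        · simp [Prod.ext_iff]; exact mem8' (i+2) 0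
        · simp [Prod.ext_iff]; exact not_mem_of_infix N2 ⟨[], rep i ++ [1,2,1,2], by simp⟩
        · simp [Prod.ext_iff]; exact not_mem_of_infix (N5 i) ⟨[], [2,1,2], by simp⟩
      have hR : Rext exampleS (rep (i+1) ++ [1,2,1,2] ++ rep 0) = ↑({0} : Finset (Fin 3)) := by
        ext x; fin_cases x
        · simp [Prod.ext_iff]; exact mem8' (i+1) 1
        · simp [Prod.ext_iff]; exact not_mem_of_infix N6 ⟨rep (i+1) ++ [1], [], by simp⟩
        · simp [Prod.ext_iff]; exact not_mem_of_infix N4 ⟨rep (i+1) ++ [1,2,1], [], by simp⟩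
      exact finish hL hR (E_singleton hL hR (by simpa [show rep 1 = [0] from rfl] using mem8' (i+2) 1)) (by decide)
    · have hL : Lext exampleS (rep (i+1) ++ [1,2,1,2] ++ rep (j+1)) = ↑({0} : Finset (Fin 3)) := by
        ext x; fin_cases x
        · simp [Prod.ext_iff]; exact mem8' (i+2) (j+1)
        · simp [Prod.ext_iff]; exact not_mem_of_infix N2 ⟨[], rep i ++ [1,2,1,2] ++ rep (j+1), by simp⟩
        · simp [Prod.ext_iff]; exact not_mem_of_infix (N5 i) ⟨[], 2 :: 1 :: 2 :: rep (j+1), by simp⟩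
      have hR : Rext exampleS (rep (i+1) ++ [1,2,1,2] ++ rep (j+1)) = ↑({0} : Finset (Fin 3)) := by
        ext x; fin_cases x
        · simp [Prod.ext_iff]; exact mem8' (i+1) (j+2)
        · simp [Prod.ext_iff]; exact not_mem_of_infix (N5 j) ⟨rep (i+1) ++ [1,2,1], [], by simp⟩
        · simp [Prod.ext_iff]; exact not_mem_of_infix N1 ⟨rep (i+1) ++ [1,2,1,2] ++ rep j, [], by simp⟩
      exact finish hL hR (E_singleton hL hR (by simpa using mem8' (i+2) (j+2))) (by decide)


-- concrete membership facts, proven directly from the definition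
lemma m0 : ([0] : List (Fin 3)) ∈ exampleS := ⟨1, 0, Or.inl ⟨[], [1,2], by decide⟩⟩
lemma m1 : ([1] : List (Fin 3)) ∈ exampleS := ⟨0, 0, Or.inl ⟨[], [2], by decide⟩⟩
lemma m2 : ([2] : List (Fin 3)) ∈ exampleS := ⟨0, 0, Or.inl ⟨[1], [], by decide⟩⟩
lemma m00 : ([0,0] : List (Fin 3)) ∈ exampleS := ⟨2, 0, Or.inl ⟨[], [1,2], by decide⟩⟩
lemma m01 : ([0,1] : List (Fin 3)) ∈ exampleS := ⟨1, 0, Or.inl ⟨[], [2], by decide⟩⟩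
lemma m20 : ([2,0] : List (Fin 3)) ∈ exampleS := ⟨0, 1, Or.inl ⟨[1], [], by decide⟩⟩
lemma m21 : ([2,1] : List (Fin 3)) ∈ exampleS := ⟨0, 0, Or.inr ⟨[1], [2], by decide⟩⟩

def vl0 : ExtVertex exampleS ([] : List (Fin 3)) := ⟨Sum.inl 0, m0⟩
def vl2 : ExtVertex exampleS ([] : List (Fin 3)) := ⟨Sum.inl 2, m2⟩
def vr0 : ExtVertex exampleS ([] : List (Fin 3)) := ⟨Sum.inr 0, m0⟩
def vr1 : ExtVertex exampleS ([] : List (Fin 3)) := ⟨Sum.inr 1, m1⟩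

lemma adj_l0r0 : (extGraph exampleS []).Adj vl0 vr0 := Or.inl ⟨0, 0, rfl, rfl, m00⟩
lemma adj_r0l2 : (extGraph exampleS []).Adj vr0 vl2 := Or.inr ⟨2, 0, rfl, rfl, m20⟩
lemma adj_l2r1 : (extGraph exampleS []).Adj vl2 vr1 := Or.inl ⟨2, 1, rfl, rfl, m21⟩
lemma adj_r1l0 : (extGraph exampleS []).Adj vr1 vl0 := Or.inr ⟨0, 1, rfl, rfl, m01⟩

def cyc : (extGraph exampleS []).Walk vl0 vl0 :=
  .cons adj_l0r0 (.cons adj_r0l2 (.cons adj_l2r1 (.cons adj_r1l0 .nil)))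

instance : DecidableEq (ExtVertex exampleS ([] : List (Fin 3))) :=
  fun u v => decidable_of_iff _ Subtype.ext_iff.symm

lemma not_acyclic : ¬ (extGraph exampleS ([] : List (Fin 3))).IsAcyclic := by
  intro h
  apply h cyc
  constructor
  · constructor
    · -- IsTrail : edges nodup
      simp only [cyc, SimpleGraph.Walk.isTrail_def, SimpleGraph.Walk.edges_cons,
        SimpleGraph.Walk.edges_nil, vl0, vl2, vr0, vr1]
      apply (SimpleGraph.Walk.isTrail_def _).mpr
      decide
    · simp [cyc]
  · -- support tail nodup
    simp only [cyc, SimpleGraph.Walk.support_cons, SimpleGraph.Walk.support_nil,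
      List.tail_cons, vl0, vl2, vr0, vr1]
    decide


/-- The set `S` of factors of `a* {bc, bcbc} a*` is neutral
(`e(w) = ℓ(w) + r(w) - 1` for every `w ∈ S`) but not acyclic: the extension graph of the
empty word contains a cycle. -/
theorem exampleS_neutral_not_acyclic :
    (∀ w ∈ exampleS, ((Eext exampleS w).ncard : ℤ)
        = (Lext exampleS w).ncard + (Rext exampleS w).ncard - 1) ∧
    ¬ (extGraph exampleS ([] : List (Fin 3))).IsAcyclic := by
  exact ⟨neutral, not_acyclic⟩

end Paper
end
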